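/- arXiv:math/0702233 — 2 statements merged into one kernel-verified Lean document; each statement's English description precedes it below -/
import Mathlib

section
/- For every n ≥ 1, every 1 ≤ p ≤ 2, every θ₀ ∈ [0, π/2) and every function f : Ω_n → ℂ, ‖f − cos^{Δ/4}θ₀(f)‖_p ≤ (θ₀/2) ‖ |∇f| ‖_p. -/
open Real Finset

namespace DiscreteCube

variable {n : ℕ}

/-- The point of the cube `{-1,1}^n` encoded by `x : Fin n → Bool`:
coordinate `j` is `1` if `x j = true` and `-1` otherwise. -/
def sgn (b : Bool) : ℂ := if b then 1 else -1

/-- Negate the `j`-th coordinate. -/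
def flip (j : Fin n) (x : Fin n → Bool) : Fin n → Bool :=
  Function.update x j (!(x j))

/-- Discrete partial derivative `(∂_j f)(x) = f(x) - f(x e_j)`. -/
def pd (j : Fin n) (f : (Fin n → Bool) → ℂ) (x : Fin n → Bool) : ℂ :=
  f x - f (flip j x)

/-- Length of the discrete gradient, `|∇f|(x) = (Σ_j |(∂_j f)(x)|²)^{1/2}`. -/
noncomputable def gradLen (f : (Fin n → Bool) → ℂ) (x : Fin n → Bool) : ℝ :=
  Real.sqrt (∑ j : Fin n, ‖pd j f x‖ ^ 2)

/-- Expectation with respect to the uniform probability on the cube. -/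
noncomputable def expect (f : (Fin n → Bool) → ℂ) : ℂ :=
  (∑ x : Fin n → Bool, f x) / 2 ^ n

/-- `L^p` norm (`1 ≤ p < ∞`) of a complex-valued function on the cube. -/
noncomputable def cLp (p : ℝ) (f : (Fin n → Bool) → ℂ) : ℝ :=
  ((∑ x : Fin n → Bool, ‖f x‖ ^ p) / 2 ^ n) ^ (1 / p)

/-- `L^p` norm (`1 ≤ p < ∞`) of a real-valued function on the cube. -/
noncomputable def rLp (p : ℝ) (g : (Fin n → Bool) → ℝ) : ℝ :=
  ((∑ x : Fin n → Bool, |g x| ^ p) / 2 ^ n) ^ (1 / p)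

end DiscreteCube

namespace DiscreteCube

variable {n : ℕ}

/-- Walsh function `ω_A(x) = ∏_{j∈A} x_j`. -/
def walsh (A : Finset (Fin n)) (x : Fin n → Bool) : ℂ := ∏ j ∈ A, sgn (x j)

/-- Walsh–Fourier coefficient `f̂(A) = 𝔼[f·ω_A]`. -/
noncomputable def coeff (f : (Fin n → Bool) → ℂ) (A : Finset (Fin n)) : ℂ :=
  (∑ x : Fin n → Bool, f x * walsh A x) / 2 ^ n

/-- The operator `cos^{Δ/4}θ`:
`cos^{Δ/4}θ(f) = Σ_A cos^{|A|}θ · f̂(A) ω_A` (the `A = ∅` term is `f̂(∅)`). -/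
noncomputable def cosD (θ : ℝ) (f : (Fin n → Bool) → ℂ) (x : Fin n → Bool) : ℂ :=
  ∑ A : Finset (Fin n), (Real.cos θ : ℂ) ^ A.card * coeff f A * walsh A x

/-- Fractional power of the discrete Laplacian, `Δ^β f = Σ_{A≠∅} (4|A|)^β f̂(A) ω_A`
(for `β > 0` the `A = ∅` term vanishes since `0^β = 0`). -/
noncomputable def deltaPow (β : ℝ) (f : (Fin n → Bool) → ℂ) (x : Fin n → Bool) : ℂ :=
  ∑ A : Finset (Fin n), (((4 * (A.card : ℝ)) ^ β : ℝ) : ℂ) * coeff f A * walsh A x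

/-- The constant `K_α = (1/Γ(1−α)) ∫_0^{π/2} (−log cos θ)^{−α} dθ`. -/
noncomputable def Kconst (α : ℝ) : ℝ :=
  (1 / Real.Gamma (1 - α)) * ∫ θ in (0:ℝ)..(Real.pi / 2), (-Real.log (Real.cos θ)) ^ (-α)

/-- The constant `k_β = (1/Γ(β)) ∫_0^{π/2} (−log cos θ)^{β−1} dθ`. -/
noncomputable def kconst (β : ℝ) : ℝ :=
  (1 / Real.Gamma β) * ∫ θ in (0:ℝ)..(Real.pi / 2), (-Real.log (Real.cos θ)) ^ (β - 1)

end DiscreteCube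

namespace DiscreteCube

variable {n : ℕ}

lemma sum_pi_bool {R : Type*} [CommSemiring R] (φ : Fin n → Bool → R) :
    ∑ σ : Fin n → Bool, ∏ j, φ j (σ j) = ∏ j, (φ j true + φ j false) := by
  classical
  rw [show (∏ j, (φ j true + φ j false)) = ∏ j, ∑ b : Bool, φ j b from
      Finset.prod_congr rfl fun j _ => by rw [Fintype.sum_bool]]
  rw [Finset.prod_univ_sum, Fintype.piFinset_univ]

lemma walsh_eq_prod_univ (A : Finset (Fin n)) (x : Fin n → Bool) :
    walsh A x = ∏ j, (if j ∈ A then sgn (x j) else 1) := by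
  rw [Fintype.prod_ite_mem]; rfl

lemma two_pow_ne : ((2:ℂ) ^ n) ≠ 0 := pow_ne_zero _ two_ne_zero

lemma sum_walsh_mul_walsh (A B : Finset (Fin n)) :
    ∑ x : Fin n → Bool, walsh A x * walsh B x = if A = B then (2:ℂ)^n else 0 := by
  have h : ∀ x : Fin n → Bool, walsh A x * walsh B x
      = ∏ j, ((if j ∈ A then sgn (x j) else 1) * (if j ∈ B then sgn (x j) else 1)) := by
    intro x; rw [walsh_eq_prod_univ, walsh_eq_prod_univ, Finset.prod_mul_distrib]
  simp only [h]
  have hfac := sum_pi_bool (n := n)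
    (fun j b => (if j ∈ A then sgn b else 1) * (if j ∈ B then sgn b else 1))
  rw [hfac]
  by_cases hAB : A = B
  · subst hAB
    rw [if_pos rfl]
    have h2 : ∀ j : Fin n, ((if j ∈ A then sgn true else 1) * (if j ∈ A then sgn true else 1)
        + (if j ∈ A then sgn false else 1) * (if j ∈ A then sgn false else 1)) = 2 := by
      intro j; by_cases hj : j ∈ A <;> norm_num [hj, sgn]
    rw [Finset.prod_congr rfl fun j _ => h2 j, Finset.prod_const, Finset.card_univ,
      Fintype.card_fin]
  · rw [if_neg hAB]
    obtain ⟨j, hj⟩ : ∃ j, ¬((j ∈ A) ↔ (j ∈ B)) := by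
      by_contra hc; push_neg at hc
      exact hAB (Finset.ext fun j => hc j)
    refine Finset.prod_eq_zero (Finset.mem_univ j) ?_
    by_cases h1 : j ∈ A <;> by_cases h2 : j ∈ B <;>
      first
      | exact absurd (iff_of_true h1 h2) hj
      | exact absurd (iff_of_false h1 h2) hj
      | norm_num [h1, h2, sgn]

lemma coeff_sum_walsh (d : Finset (Fin n) → ℂ) (A : Finset (Fin n)) :
    coeff (fun x => ∑ B, d B * walsh B x) A = d A := by
  unfold coeff
  simp only [Finset.sum_mul]
  rw [Finset.sum_comm]
  have : ∀ B : Finset (Fin n), ∑ x : Fin n → Bool, d B * walsh B x * walsh A x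
      = d B * (if B = A then (2:ℂ)^n else 0) := by
    intro B
    rw [← sum_walsh_mul_walsh B A, Finset.mul_sum]
    exact Finset.sum_congr rfl fun x _ => (mul_assoc _ _ _)
  rw [Finset.sum_congr rfl fun B _ => this B]
  simp only [mul_ite, mul_zero]
  rw [Finset.sum_ite_eq' Finset.univ A (fun B => d B * (2:ℂ)^n)]
  simp [two_pow_ne]

lemma sum_walsh_point (x y : Fin n → Bool) :
    ∑ A : Finset (Fin n), walsh A x * walsh A y = if x = y then (2:ℂ)^n else 0 := by
  have h1 : ∀ A : Finset (Fin n), walsh A x * walsh A y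
      = (∏ j ∈ A, (sgn (x j) * sgn (y j))) * ∏ j ∈ Finset.univ \ A, (1:ℂ) := by
    intro A; rw [Finset.prod_mul_distrib, Finset.prod_const_one, mul_one]; rfl
  simp only [h1]
  rw [show (∑ A : Finset (Fin n), (∏ j ∈ A, (sgn (x j) * sgn (y j))) * ∏ j ∈ Finset.univ \ A, (1:ℂ))
      = ∑ A ∈ (Finset.univ : Finset (Fin n)).powerset,
        (∏ j ∈ A, (sgn (x j) * sgn (y j))) * ∏ j ∈ Finset.univ \ A, (1:ℂ) by
    rw [Finset.powerset_univ]]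
  rw [← Finset.prod_add]
  by_cases hxy : x = y
  · subst hxy
    rw [if_pos rfl]
    have h2 : ∀ j : Fin n, sgn (x j) * sgn (x j) + 1 = 2 := by
      intro j; cases hx : x j <;> norm_num [sgn]
    rw [Finset.prod_congr rfl fun j _ => h2 j, Finset.prod_const, Finset.card_univ,
      Fintype.card_fin]
  · rw [if_neg hxy]
    obtain ⟨j, hj⟩ : ∃ j, x j ≠ y j := by
      by_contra hc; push_neg at hc; exact hxy (funext hc)
    refine Finset.prod_eq_zero (Finset.mem_univ j) ?_
    cases hx : x j <;> cases hy : y j <;> simp [hx, hy, sgn] at hj ⊢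
    all_goals norm_num

lemma inversion (u : (Fin n → Bool) → ℂ) (y : Fin n → Bool) :
    ∑ A : Finset (Fin n), coeff u A * walsh A y = u y := by
  unfold coeff
  simp only [div_mul_eq_mul_div, Finset.sum_mul, Finset.sum_div]
  rw [Finset.sum_comm]
  have : ∀ x : Fin n → Bool, ∑ A : Finset (Fin n), u x * walsh A x * walsh A y / 2^n
      = u x * (if x = y then (2:ℂ)^n else 0) / 2^n := by
    intro x
    rw [← sum_walsh_point x y, Finset.mul_sum, Finset.sum_div]
    exact Finset.sum_congr rfl fun A _ => by rw [mul_assoc]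
  rw [Finset.sum_congr rfl fun x _ => this x]
  simp only [mul_ite, mul_zero, ite_div, zero_div]
  rw [Finset.sum_ite_eq' Finset.univ y (fun x => u x * (2:ℂ)^n / 2^n)]
  simp only [Finset.mem_univ, if_true]
  rw [mul_div_assoc, div_self two_pow_ne, mul_one]


lemma sgn_not (b : Bool) : sgn (!b) = - sgn b := by cases b <;> norm_num [sgn]

lemma flip_apply_self (j : Fin n) (x : Fin n → Bool) : flip j x j = !(x j) := by
  simp [flip]

lemma flip_apply_ne (j : Fin n) (x : Fin n → Bool) {i : Fin n} (h : i ≠ j) :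
    flip j x i = x i := by
  simp [flip, Function.update_of_ne h]

lemma flip_flip (j : Fin n) (x : Fin n → Bool) : flip j (flip j x) = x := by
  funext i
  by_cases h : i = j
  · subst h; rw [flip_apply_self, flip_apply_self, Bool.not_not]
  · rw [flip_apply_ne _ _ h, flip_apply_ne _ _ h]

lemma sum_flip {M : Type*} [AddCommMonoid M] (j : Fin n) (F : (Fin n → Bool) → M) :
    ∑ x : Fin n → Bool, F (flip j x) = ∑ x : Fin n → Bool, F x :=
  Fintype.sum_bijective (flip j) (Function.Involutive.bijective (flip_flip j)) _ _ fun _ => rfl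

lemma flip_walsh (j : Fin n) (A : Finset (Fin n)) (x : Fin n → Bool) :
    walsh A (flip j x) = (if j ∈ A then -1 else 1) * walsh A x := by
  by_cases hj : j ∈ A
  · rw [if_pos hj]
    unfold walsh
    rw [← Finset.mul_prod_erase A (fun i => sgn (flip j x i)) hj,
        ← Finset.mul_prod_erase A (fun i => sgn (x i)) hj]
    rw [flip_apply_self, sgn_not, neg_one_mul, ← neg_mul]
    congr 1
    refine Finset.prod_congr rfl fun i hi => ?_
    rw [flip_apply_ne _ _ (Finset.ne_of_mem_erase hi)]
  · rw [if_neg hj, one_mul]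
    refine Finset.prod_congr rfl fun i hi => ?_
    rw [flip_apply_ne _ _ (by rintro rfl; exact hj hi)]

lemma coeff_comp_flip (j : Fin n) (f : (Fin n → Bool) → ℂ) (A : Finset (Fin n)) :
    coeff (fun x => f (flip j x)) A = (if j ∈ A then -1 else 1) * coeff f A := by
  unfold coeff
  rw [← mul_div_assoc]
  congr 1
  have h1 : ∑ x : Fin n → Bool, f (flip j x) * walsh A x
      = ∑ x : Fin n → Bool, f x * walsh A (flip j x) := by
    have := sum_flip j (fun y => f y * walsh A (flip j y))
    rw [← this]
    refine Finset.sum_congr rfl fun x _ => ?_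
    rw [flip_flip]
  rw [h1]
  rw [Finset.mul_sum]
  refine Finset.sum_congr rfl fun x _ => ?_
  rw [flip_walsh]; ring

lemma coeff_sub (u v : (Fin n → Bool) → ℂ) (A : Finset (Fin n)) :
    coeff (fun x => u x - v x) A = coeff u A - coeff v A := by
  unfold coeff
  rw [← sub_div]
  congr 1
  rw [← Finset.sum_sub_distrib]
  exact Finset.sum_congr rfl fun x _ => by ring

lemma coeff_pd (j : Fin n) (f : (Fin n → Bool) → ℂ) (A : Finset (Fin n)) :
    coeff (pd j f) A = if j ∈ A then 2 * coeff f A else 0 := by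
  have h : coeff (pd j f) A = coeff f A - coeff (fun x => f (flip j x)) A := by
    unfold pd; exact coeff_sub _ _ _
  rw [h, coeff_comp_flip]
  by_cases hj : j ∈ A
  · rw [if_pos hj, if_pos hj]; ring
  · rw [if_neg hj, if_neg hj]; ring

def act (x σ : Fin n → Bool) : Fin n → Bool := fun j => x j == σ j

lemma sgn_beq (a b : Bool) : sgn (a == b) = sgn a * sgn b := by
  cases a <;> cases b <;> norm_num [sgn]

lemma walsh_act (A : Finset (Fin n)) (x σ : Fin n → Bool) :
    walsh A (act x σ) = walsh A x * walsh A σ := by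
  unfold walsh
  rw [← Finset.prod_mul_distrib]
  exact Finset.prod_congr rfl fun j _ => sgn_beq _ _

lemma act_act (σ x : Fin n → Bool) : act (act x σ) σ = x := by
  funext j; cases hx : x j <;> cases hs : σ j <;> simp [act, hx, hs]

lemma sum_act {M : Type*} [AddCommMonoid M] (σ : Fin n → Bool) (F : (Fin n → Bool) → M) :
    ∑ x : Fin n → Bool, F (act x σ) = ∑ x : Fin n → Bool, F x :=
  Fintype.sum_bijective (fun x => act x σ)
    (Function.Involutive.bijective (fun x => act_act σ x)) _ _ fun _ => rfl

lemma pairing (u v : (Fin n → Bool) → ℂ) :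
    (∑ x : Fin n → Bool, u x * v x) / 2^n = ∑ A : Finset (Fin n), coeff u A * coeff v A := by
  have h1 : ∀ x, u x * v x = ∑ A : Finset (Fin n), coeff v A * (u x * walsh A x) := by
    intro x
    conv_lhs => rw [← inversion v x]
    rw [Finset.mul_sum]
    exact Finset.sum_congr rfl fun A _ => by ring
  rw [Finset.sum_congr rfl fun x _ => h1 x, Finset.sum_comm, Finset.sum_div]
  refine Finset.sum_congr rfl fun A _ => ?_
  rw [← Finset.mul_sum, mul_div_assoc]
  unfold coeff
  ring

lemma coeff_cosD (θ : ℝ) (f : (Fin n → Bool) → ℂ) (A : Finset (Fin n)) :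
    coeff (cosD θ f) A = (Real.cos θ : ℂ)^A.card * coeff f A := by
  have h : cosD θ f = fun x => ∑ B : Finset (Fin n),
      ((Real.cos θ : ℂ)^B.card * coeff f B) * walsh B x := rfl
  rw [h, coeff_sum_walsh]

noncomputable def nu (c : ℝ) (b : Bool) : ℝ := if b then (1+c)/2 else (1-c)/2

noncomputable def mw (c : ℝ) (σ : Fin n → Bool) : ℝ := ∏ j, nu c (σ j)

def xi (c : ℝ) (b : Bool) : ℝ := (if b then 1 else -1) - c


lemma nu_true (c : ℝ) : nu c true = (1+c)/2 := rfl
lemma nu_false (c : ℝ) : nu c false = (1-c)/2 := rfl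
lemma xi_true (c : ℝ) : xi c true = 1 - c := by simp [xi]
lemma xi_false (c : ℝ) : xi c false = -1 - c := by simp [xi]
lemma sgn_true : (sgn true : ℂ) = 1 := rfl
lemma sgn_false : (sgn false : ℂ) = -1 := rfl

lemma mw_nonneg {c : ℝ} (hc : |c| ≤ 1) (σ : Fin n → Bool) : 0 ≤ mw c σ := by
  rw [abs_le] at hc
  refine Finset.prod_nonneg fun j _ => ?_
  cases hs : σ j <;> simp [nu] <;> linarith [hc.1, hc.2]

lemma sum_mw (c : ℝ) : ∑ σ : Fin n → Bool, mw c σ = 1 := by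
  unfold mw
  rw [sum_pi_bool]
  rw [Finset.prod_congr rfl fun j (_ : j ∈ Finset.univ) =>
    (show nu c true + nu c false = 1 by simp [nu]; ring)]
  exact Finset.prod_const_one

lemma sum_mw_xi_xi (c : ℝ) (j k : Fin n) :
    ∑ σ : Fin n → Bool, mw c σ * xi c (σ j) * xi c (σ k)
      = if j = k then 1 - c^2 else 0 := by
  have h1 : ∀ σ : Fin n → Bool, mw c σ * xi c (σ j) * xi c (σ k)
      = ∏ i, (nu c (σ i) * (if i = j then xi c (σ i) else 1)
          * (if i = k then xi c (σ i) else 1)) := by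
    intro σ
    rw [Finset.prod_mul_distrib, Finset.prod_mul_distrib]
    congr 1
    · congr 1
      rw [Finset.prod_ite_eq' Finset.univ j (fun i => xi c (σ i))]
      simp
    · rw [Finset.prod_ite_eq' Finset.univ k (fun i => xi c (σ i))]
      simp
  have hfac := sum_pi_bool (n := n) (fun i b => nu c b * (if i = j then xi c b else 1)
    * (if i = k then xi c b else 1))
  rw [Finset.sum_congr rfl fun σ _ => h1 σ, hfac]
  by_cases hjk : j = k
  · subst hjk
    rw [if_pos rfl]
    have h2 : ∀ i, (nu c true * (if i = j then xi c true else 1) * (if i = j then xi c true else 1)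
        + nu c false * (if i = j then xi c false else 1) * (if i = j then xi c false else 1))
        = if i = j then 1 - c^2 else 1 := by
      intro i
      by_cases hi : i = j
      · subst hi
        simp only [if_pos rfl, if_true, ite_true, nu_true, nu_false, xi_true, xi_false]
        try ring
      · simp only [hi, if_false, nu_true, nu_false, if_neg hi]
        try ring
    rw [Finset.prod_congr rfl fun i _ => h2 i,
      Finset.prod_ite_eq' Finset.univ j (fun _ => 1 - c^2)]
    simp
  · rw [if_neg hjk]
    refine Finset.prod_eq_zero (Finset.mem_univ j) ?_
    simp only [if_pos rfl, if_true, ite_true, if_neg hjk, nu_true, nu_false, xi_true, xi_false]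
    try ring

lemma sum_mw_xi_walsh (c : ℝ) (j : Fin n) (B : Finset (Fin n)) :
    ∑ σ : Fin n → Bool, ((mw c σ * xi c (σ j) : ℝ) : ℂ) * walsh B σ
      = if j ∈ B then (((1 - c^2) * c^(B.card - 1) : ℝ) : ℂ) else 0 := by
  have h1 : ∀ σ : Fin n → Bool, ((mw c σ * xi c (σ j) : ℝ) : ℂ) * walsh B σ
      = ∏ i, (((nu c (σ i) : ℝ) : ℂ) * (if i = j then ((xi c (σ i) : ℝ) : ℂ) else 1)
          * (if i ∈ B then sgn (σ i) else 1)) := by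
    intro σ
    rw [Finset.prod_mul_distrib, Finset.prod_mul_distrib]
    rw [show (∏ i, (if i = j then ((xi c (σ i) : ℝ) : ℂ) else 1)) = ((xi c (σ j) : ℝ) : ℂ) by
      rw [Finset.prod_ite_eq' Finset.univ j (fun i => ((xi c (σ i) : ℝ) : ℂ))]; simp]
    rw [← walsh_eq_prod_univ]
    unfold mw
    push_cast
    ring
  have hfac := sum_pi_bool (n := n) (fun i b => ((nu c b : ℝ) : ℂ)
    * (if i = j then ((xi c b : ℝ) : ℂ) else 1) * (if i ∈ B then sgn b else 1))
  rw [Finset.sum_congr rfl fun σ _ => h1 σ, hfac]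
  have h2 : ∀ i, (((nu c true : ℝ) : ℂ) * (if i = j then ((xi c true : ℝ) : ℂ) else 1)
          * (if i ∈ B then sgn true else 1)
        + ((nu c false : ℝ) : ℂ) * (if i = j then ((xi c false : ℝ) : ℂ) else 1)
          * (if i ∈ B then sgn false else 1))
      = if i = j then (if i ∈ B then (((1 - c^2) : ℝ) : ℂ) else 0)
        else (if i ∈ B then ((c : ℝ) : ℂ) else 1) := by
    intro i
    by_cases hi : i = j
    · subst hi
      by_cases hB : i ∈ B
      · simp only [if_pos rfl, if_true, ite_true, if_pos hB, nu_true, nu_false, xi_true, xi_false,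
          sgn_true, sgn_false]
        try (push_cast; ring)
      · simp only [if_pos rfl, if_true, ite_true, if_neg hB, nu_true, nu_false, xi_true, xi_false]
        try (push_cast; ring)
    · by_cases hB : i ∈ B
      · simp only [if_neg hi, if_pos hB, nu_true, nu_false, sgn_true, sgn_false]
        try (push_cast; ring)
      · simp only [if_neg hi, if_neg hB, nu_true, nu_false]
        try (push_cast; ring)
  rw [Finset.prod_congr rfl fun i _ => h2 i]
  by_cases hjB : j ∈ B
  · rw [if_pos hjB]
    rw [← Finset.prod_mul_prod_compl B]
    have hBc : ∀ i ∈ Bᶜ, (if i = j then (if i ∈ B then (((1 - c^2) : ℝ) : ℂ) else 0)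
        else (if i ∈ B then ((c : ℝ) : ℂ) else 1)) = 1 := by
      intro i hi
      rw [Finset.mem_compl] at hi
      rw [if_neg (by rintro rfl; exact hi hjB), if_neg hi]
    rw [Finset.prod_congr rfl hBc, Finset.prod_const_one, mul_one]
    rw [← Finset.mul_prod_erase B _ hjB, if_pos rfl, if_pos hjB]
    have hBe : ∀ i ∈ B.erase j, (if i = j then (if i ∈ B then (((1 - c^2) : ℝ) : ℂ) else 0)
        else (if i ∈ B then ((c : ℝ) : ℂ) else 1)) = ((c : ℝ) : ℂ) := by
      intro i hi
      rw [if_neg (Finset.ne_of_mem_erase hi), if_pos (Finset.mem_of_mem_erase hi)]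
    rw [Finset.prod_congr rfl hBe, Finset.prod_const, Finset.card_erase_of_mem hjB]
    push_cast
    ring
  · rw [if_neg hjB]
    refine Finset.prod_eq_zero (Finset.mem_univ j) ?_
    rw [if_pos rfl, if_neg hjB]

noncomputable def Vop (c : ℝ) (j : Fin n) (h : (Fin n → Bool) → ℂ) (x : Fin n → Bool) : ℂ :=
  ∑ σ : Fin n → Bool, ((mw c σ * xi c (σ j) : ℝ) : ℂ) * h (act x σ)

lemma Vop_eq_sum_walsh (c : ℝ) (j : Fin n) (h : (Fin n → Bool) → ℂ) (x : Fin n → Bool) :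
    Vop c j h x = ∑ B : Finset (Fin n),
      ((if j ∈ B then (((1 - c^2) * c^(B.card - 1) : ℝ) : ℂ) else 0) * coeff h B)
        * walsh B x := by
  unfold Vop
  have h1 : ∀ σ, h (act x σ) = ∑ B : Finset (Fin n), coeff h B * (walsh B x * walsh B σ) := by
    intro σ
    rw [← inversion h (act x σ)]
    exact Finset.sum_congr rfl fun B _ => by rw [walsh_act]
  rw [Finset.sum_congr rfl fun σ (_ : σ ∈ Finset.univ) => by rw [h1 σ, Finset.mul_sum]]
  rw [Finset.sum_comm]
  refine Finset.sum_congr rfl fun B _ => ?_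
  have h3 : ∀ σ : Fin n → Bool, ((mw c σ * xi c (σ j) : ℝ) : ℂ)
        * (coeff h B * (walsh B x * walsh B σ))
      = (coeff h B * walsh B x) * (((mw c σ * xi c (σ j) : ℝ) : ℂ) * walsh B σ) :=
    fun σ => by ring
  rw [Finset.sum_congr rfl fun σ _ => h3 σ, ← Finset.mul_sum, sum_mw_xi_walsh]
  ring

lemma coeff_Vop (c : ℝ) (j : Fin n) (h : (Fin n → Bool) → ℂ) (B : Finset (Fin n)) :
    coeff (Vop c j h) B
      = (if j ∈ B then (((1 - c^2) * c^(B.card - 1) : ℝ) : ℂ) else 0) * coeff h B := by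
  rw [show Vop c j h = fun x => ∑ B : Finset (Fin n),
      ((if j ∈ B then (((1 - c^2) * c^(B.card - 1) : ℝ) : ℂ) else 0) * coeff h B) * walsh B x
    from funext (Vop_eq_sum_walsh c j h), coeff_sum_walsh]

lemma sum_pair_pd_Vop (c : ℝ) (f h : (Fin n → Bool) → ℂ) :
    ∑ j : Fin n, (∑ x : Fin n → Bool, pd j f x * Vop c j h x) / 2^n
      = ∑ A : Finset (Fin n), (A.card : ℂ) * (((1 - c^2) * c^(A.card - 1) : ℝ) : ℂ)
          * (2 * coeff f A * coeff h A) := by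
  have h1 : ∀ j : Fin n, (∑ x : Fin n → Bool, pd j f x * Vop c j h x) / 2^n
      = ∑ A : Finset (Fin n),
          (if j ∈ A then (((1 - c^2) * c^(A.card - 1) : ℝ) : ℂ) * (2 * coeff f A * coeff h A)
           else 0) := by
    intro j
    rw [pairing]
    refine Finset.sum_congr rfl fun A _ => ?_
    rw [coeff_pd, coeff_Vop]
    by_cases hj : j ∈ A
    · rw [if_pos hj, if_pos hj, if_pos hj]; ring
    · rw [if_neg hj, if_neg hj, if_neg hj]; ring
  rw [Finset.sum_congr rfl fun j (_ : j ∈ Finset.univ) => h1 j, Finset.sum_comm]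
  refine Finset.sum_congr rfl fun A _ => ?_
  rw [Finset.sum_ite_mem, Finset.univ_inter, Finset.sum_const, nsmul_eq_mul]
  ring

lemma ftc_cos_pow (θ₀ : ℝ) (k : ℕ) :
    ((1 : ℝ) - (Real.cos θ₀)^k)
      = ∫ θ in (0:ℝ)..θ₀, (k : ℝ) * (Real.cos θ)^(k-1) * Real.sin θ := by
  have hderiv : ∀ θ ∈ Set.uIcc (0:ℝ) θ₀,
      HasDerivAt (fun t => -(Real.cos t)^k) ((k : ℝ) * (Real.cos θ)^(k-1) * Real.sin θ) θ := by
    intro θ _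
    have h1 : HasDerivAt (fun t => (Real.cos t)^k)
        ((k:ℝ) * (Real.cos θ)^(k-1) * (-Real.sin θ)) θ := (Real.hasDerivAt_cos θ).pow k
    have h2 := h1.neg
    rw [show ((k : ℝ) * (Real.cos θ)^(k-1) * Real.sin θ)
        = -((k:ℝ) * (Real.cos θ)^(k-1) * (-Real.sin θ)) by ring]
    exact h2
  have hint : IntervalIntegrable (fun θ => (k : ℝ) * (Real.cos θ)^(k-1) * Real.sin θ)
      MeasureTheory.volume 0 θ₀ :=
    (Continuous.intervalIntegrable (by continuity) 0 θ₀)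
  rw [intervalIntegral.integral_eq_sub_of_hasDerivAt hderiv hint]
  rw [Real.cos_zero, one_pow]
  ring

lemma pair_g_h (θ₀ : ℝ) (f h : (Fin n → Bool) → ℂ) :
    (∑ x : Fin n → Bool, (f x - cosD θ₀ f x) * h x) / 2^n
      = ∫ θ in (0:ℝ)..θ₀, ∑ A : Finset (Fin n),
          (((A.card : ℝ) * (Real.cos θ)^(A.card - 1) * Real.sin θ : ℝ) : ℂ)
            * (coeff f A * coeff h A) := by
  have hpair := pairing (n := n) (fun x => f x - cosD θ₀ f x) h
  rw [hpair]
  have hterm : ∀ A : Finset (Fin n),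
      coeff (fun x => f x - cosD θ₀ f x) A * coeff h A
        = ∫ θ in (0:ℝ)..θ₀, (((A.card : ℝ) * (Real.cos θ)^(A.card - 1) * Real.sin θ : ℝ) : ℂ)
            * (coeff f A * coeff h A) := by
    intro A
    have h1 : coeff (fun x => f x - cosD θ₀ f x) A
        = (((1 - (Real.cos θ₀)^A.card : ℝ)) : ℂ) * coeff f A := by
      rw [coeff_sub, coeff_cosD]
      push_cast
      ring
    rw [h1, intervalIntegral.integral_mul_const, intervalIntegral.integral_ofReal,
      ← ftc_cos_pow θ₀ A.card]
    ring
  rw [Finset.sum_congr rfl fun A _ => hterm A]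
  rw [← intervalIntegral.integral_finset_sum]
  intro A _
  refine Continuous.intervalIntegrable ?_ 0 θ₀
  have : Continuous fun θ : ℝ => (((A.card : ℝ) * (Real.cos θ)^(A.card - 1) * Real.sin θ : ℝ) : ℂ) :=
    Complex.continuous_ofReal.comp
      (((continuous_const.mul (Real.continuous_cos.pow _)).mul Real.continuous_sin))
  exact this.mul continuous_const

lemma key_sq (h : (Fin n → Bool) → ℂ) {c s : ℝ} (hs : 0 ≤ s) (hcs : 1 - c^2 = s^2)
    (hc : |c| ≤ 1) (x : Fin n → Bool) :
    Real.sqrt (∑ j : Fin n, ‖Vop c j h x‖^2)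
      ≤ s * Real.sqrt (∑ σ : Fin n → Bool, mw c σ * ‖h (act x σ)‖^2) := by
  set z : Fin n → ℂ := fun j => Vop c j h x with hz
  set T : ℝ := ∑ j : Fin n, ‖z j‖^2 with hT
  have hT0 : 0 ≤ T := Finset.sum_nonneg fun j _ => sq_nonneg _
  have hM0 : 0 ≤ Real.sqrt (∑ σ : Fin n → Bool, mw c σ * ‖h (act x σ)‖^2) :=
    Real.sqrt_nonneg _
  set W : (Fin n → Bool) → ℂ :=
    fun σ => ∑ j : Fin n, (starRingEnd ℂ) (z j) * ((xi c (σ j) : ℝ) : ℂ) with hW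
  have hzz : ∀ j : Fin n, (starRingEnd ℂ) (z j) * z j = ((‖z j‖^2 : ℝ) : ℂ) := by
    intro j
    rw [mul_comm, Complex.mul_conj]
    norm_cast
    exact (Complex.sq_norm _).symm
  -- Identity 1
  have hid1 : (T : ℝ) = ‖∑ σ : Fin n → Bool,
      ((mw c σ : ℝ) : ℂ) * (W σ * h (act x σ))‖ := by
    have heq : ∑ σ : Fin n → Bool, ((mw c σ : ℝ) : ℂ) * (W σ * h (act x σ)) = ((T : ℝ) : ℂ) := by
      have hterm : ∀ σ : Fin n → Bool, ((mw c σ : ℝ) : ℂ) * (W σ * h (act x σ))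
          = ∑ j : Fin n, (starRingEnd ℂ) (z j)
              * (((mw c σ * xi c (σ j) : ℝ) : ℂ) * h (act x σ)) := by
        intro σ
        simp only [hW]
        rw [Finset.sum_mul, Finset.mul_sum]
        refine Finset.sum_congr rfl fun j _ => ?_
        push_cast
        ring
      rw [Finset.sum_congr rfl fun σ _ => hterm σ, Finset.sum_comm]
      have hVj : ∀ j : Fin n, ∑ σ : Fin n → Bool, (starRingEnd ℂ) (z j)
          * (((mw c σ * xi c (σ j) : ℝ) : ℂ) * h (act x σ)) = (starRingEnd ℂ) (z j) * z j := by
        intro j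
        rw [← Finset.mul_sum]
        rfl
      rw [Finset.sum_congr rfl fun j _ => hVj j, Finset.sum_congr rfl fun j _ => hzz j,
        hT, Complex.ofReal_sum]
    rw [heq, Complex.norm_real, Real.norm_eq_abs, abs_of_nonneg hT0]
  -- Identity 2
  have hid2 : ∑ σ : Fin n → Bool, mw c σ * ‖W σ‖^2 = (1 - c^2) * T := by
    have hconjW : ∀ σ : Fin n → Bool,
        (starRingEnd ℂ) (W σ) = ∑ k : Fin n, z k * ((xi c (σ k) : ℝ) : ℂ) := by
      intro σ
      simp only [hW]
      rw [map_sum]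
      refine Finset.sum_congr rfl fun k _ => ?_
      rw [map_mul, Complex.conj_conj, Complex.conj_ofReal]
    have h1 : ∀ σ : Fin n → Bool, ((mw c σ : ℝ) : ℂ) * (W σ * (starRingEnd ℂ) (W σ))
        = ∑ j : Fin n, ∑ k : Fin n, ((starRingEnd ℂ) (z j) * z k)
            * (((mw c σ * (xi c (σ j) * xi c (σ k)) : ℝ) : ℂ)) := by
      intro σ
      rw [hconjW σ]
      simp only [hW]
      rw [Finset.sum_mul_sum, Finset.mul_sum]
      refine Finset.sum_congr rfl fun j _ => ?_
      rw [Finset.mul_sum]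
      refine Finset.sum_congr rfl fun k _ => ?_
      push_cast
      ring
    have hid2C : ∑ σ : Fin n → Bool, ((mw c σ : ℝ) : ℂ) * (W σ * (starRingEnd ℂ) (W σ))
        = (((1 - c^2) * T : ℝ) : ℂ) := by
      rw [Finset.sum_congr rfl fun σ _ => h1 σ, Finset.sum_comm]
      have h2 : ∀ j : Fin n, ∑ σ : Fin n → Bool, ∑ k : Fin n, ((starRingEnd ℂ) (z j) * z k)
          * (((mw c σ * (xi c (σ j) * xi c (σ k)) : ℝ) : ℂ))
          = ((starRingEnd ℂ) (z j) * z j) * ((1 - c^2 : ℝ) : ℂ) := by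
        intro j
        rw [Finset.sum_comm]
        have h3 : ∀ k : Fin n, ∑ σ : Fin n → Bool, ((starRingEnd ℂ) (z j) * z k)
            * (((mw c σ * (xi c (σ j) * xi c (σ k)) : ℝ) : ℂ))
            = ((starRingEnd ℂ) (z j) * z k)
              * (((if j = k then 1 - c^2 else 0 : ℝ)) : ℂ) := by
          intro k
          rw [← Finset.mul_sum, ← sum_mw_xi_xi c j k, Complex.ofReal_sum]
          congr 1
          refine Finset.sum_congr rfl fun σ _ => ?_
          push_cast
          ring
        rw [Finset.sum_congr rfl fun k _ => h3 k]
        rw [Finset.sum_eq_single j]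
        · rw [if_pos rfl]
        · intro k _ hk
          rw [if_neg (by exact fun hh => hk (hh.symm ▸ rfl))]
          · simp
        · intro hj
          exact absurd (Finset.mem_univ j) hj
      rw [Finset.sum_congr rfl fun j _ => h2 j, ← Finset.sum_mul,
        Finset.sum_congr rfl fun j _ => hzz j, ← Complex.ofReal_sum, ← hT]
      rw [← Complex.ofReal_mul]
      norm_cast
      ring
    have hcast : ((∑ σ : Fin n → Bool, mw c σ * ‖W σ‖^2 : ℝ) : ℂ)
        = ∑ σ : Fin n → Bool, ((mw c σ : ℝ) : ℂ) * (W σ * (starRingEnd ℂ) (W σ)) := by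
      rw [Complex.ofReal_sum]
      refine Finset.sum_congr rfl fun σ _ => ?_
      rw [Complex.ofReal_mul]
      congr 1
      rw [Complex.mul_conj]
      norm_cast
      exact Complex.sq_norm _
    have := hcast.trans hid2C
    exact_mod_cast this
  -- Step 3
  have hstep : T ≤ s * Real.sqrt T
      * Real.sqrt (∑ σ : Fin n → Bool, mw c σ * ‖h (act x σ)‖^2) := by
    have h2 : ‖∑ σ : Fin n → Bool, ((mw c σ : ℝ) : ℂ) * (W σ * h (act x σ))‖
        ≤ ∑ σ : Fin n → Bool, mw c σ * (‖W σ‖ * ‖h (act x σ)‖) := by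
      refine le_trans (norm_sum_le _ _) ?_
      refine Finset.sum_le_sum fun σ _ => ?_
      rw [norm_mul, norm_mul, Complex.norm_real, Real.norm_eq_abs, abs_of_nonneg (mw_nonneg hc σ)]
    have e1 : ∀ (F : (Fin n → Bool) → ℝ),
        (∑ σ : Fin n → Bool, (Real.sqrt (mw c σ) * F σ)^2)
          = ∑ σ : Fin n → Bool, mw c σ * (F σ)^2 := by
      intro F
      refine Finset.sum_congr rfl fun σ _ => ?_
      rw [mul_pow, Real.sq_sqrt (mw_nonneg hc σ)]
    have h3 : ∑ σ : Fin n → Bool, mw c σ * (‖W σ‖ * ‖h (act x σ)‖)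
        ≤ Real.sqrt (∑ σ : Fin n → Bool, mw c σ * ‖W σ‖^2)
          * Real.sqrt (∑ σ : Fin n → Bool, mw c σ * ‖h (act x σ)‖^2) := by
      have hcs2 := Real.sum_mul_le_sqrt_mul_sqrt Finset.univ
        (fun σ => Real.sqrt (mw c σ) * ‖W σ‖)
        (fun σ => Real.sqrt (mw c σ) * ‖h (act x σ)‖)
      rw [e1, e1] at hcs2
      refine le_trans (le_of_eq ?_) hcs2
      refine Finset.sum_congr rfl fun σ _ => ?_
      rw [show Real.sqrt (mw c σ) * ‖W σ‖
            * (Real.sqrt (mw c σ) * ‖h (act x σ)‖)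
          = (Real.sqrt (mw c σ) * Real.sqrt (mw c σ))
            * (‖W σ‖ * ‖h (act x σ)‖) from by ring,
        Real.mul_self_sqrt (mw_nonneg hc σ)]
    have h4 : Real.sqrt (∑ σ : Fin n → Bool, mw c σ * ‖W σ‖^2)
        = s * Real.sqrt T := by
      rw [hid2, hcs, Real.sqrt_mul (sq_nonneg s), Real.sqrt_sq hs]
    calc T = _ := hid1
      _ ≤ _ := h2
      _ ≤ _ := h3
      _ = s * Real.sqrt T * _ := by rw [h4]
  rcases eq_or_lt_of_le hT0 with hT0' | hTpos
  · rw [← hT0', Real.sqrt_zero]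
    exact mul_nonneg hs hM0
  · have hsqle : Real.sqrt T * Real.sqrt T
        ≤ (s * Real.sqrt (∑ σ : Fin n → Bool, mw c σ * ‖h (act x σ)‖^2))
          * Real.sqrt T := by
      rw [Real.mul_self_sqrt hT0]
      calc T ≤ _ := hstep
        _ = _ := by ring
    exact le_of_mul_le_mul_right hsqle (Real.sqrt_pos.2 hTpos)

lemma core_bound (f h : (Fin n → Bool) → ℂ) {c s : ℝ} (hspos : 0 < s) (hcs : 1 - c^2 = s^2)
    (hc : |c| ≤ 1) :
    ‖∑ A : Finset (Fin n),
        (((A.card : ℝ) * c^(A.card - 1) * s : ℝ) : ℂ) * (coeff f A * coeff h A)‖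
      ≤ (1/2) * ((∑ x : Fin n → Bool, gradLen f x
          * Real.sqrt (∑ σ : Fin n → Bool, mw c σ * ‖h (act x σ)‖^2)) / 2^n) := by
  have hiden : ∑ j : Fin n, (∑ x : Fin n → Bool, pd j f x * Vop c j h x)/2^n
      = ((2*s : ℝ) : ℂ) * ∑ A : Finset (Fin n),
          (((A.card : ℝ) * c^(A.card - 1) * s : ℝ) : ℂ) * (coeff f A * coeff h A) := by
    rw [sum_pair_pd_Vop c f h, Finset.mul_sum]
    refine Finset.sum_congr rfl fun A _ => ?_
    have hcsC : (1 : ℂ) - (c : ℂ)^2 = (s : ℂ)^2 := by exact_mod_cast hcs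
    push_cast
    rw [hcsC]
    ring
  have habs : (2*s) * ‖∑ A : Finset (Fin n),
      (((A.card : ℝ) * c^(A.card - 1) * s : ℝ) : ℂ) * (coeff f A * coeff h A)‖
      = ‖∑ j : Fin n, (∑ x : Fin n → Bool, pd j f x * Vop c j h x)/2^n‖ := by
    rw [hiden, norm_mul, Complex.norm_real, Real.norm_eq_abs, abs_of_pos (by linarith : (0:ℝ) < 2*s)]
  have hswap : ∑ j : Fin n, (∑ x : Fin n → Bool, pd j f x * Vop c j h x)/2^n
      = (∑ x : Fin n → Bool, ∑ j : Fin n, pd j f x * Vop c j h x)/2^n := by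
    rw [← Finset.sum_div, Finset.sum_comm]
  have hpt : ∀ x : Fin n → Bool, ‖∑ j : Fin n, pd j f x * Vop c j h x‖
      ≤ gradLen f x * (s * Real.sqrt (∑ σ : Fin n → Bool,
          mw c σ * ‖h (act x σ)‖^2)) := by
    intro x
    have ha : ‖∑ j : Fin n, pd j f x * Vop c j h x‖
        ≤ ∑ j : Fin n, ‖pd j f x‖ * ‖Vop c j h x‖ := by
      refine le_trans (norm_sum_le _ _) ?_
      exact le_of_eq (Finset.sum_congr rfl fun j _ => norm_mul _ _)
    have hb := Real.sum_mul_le_sqrt_mul_sqrt Finset.univ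
      (fun j => ‖pd j f x‖) (fun j => ‖Vop c j h x‖)
    have hcq : Real.sqrt (∑ j : Fin n, ‖pd j f x‖^2) = gradLen f x := rfl
    have hd := key_sq h (le_of_lt hspos) hcs hc x
    calc ‖∑ j : Fin n, pd j f x * Vop c j h x‖
        ≤ ∑ j : Fin n, ‖pd j f x‖ * ‖Vop c j h x‖ := ha
      _ ≤ Real.sqrt (∑ j : Fin n, ‖pd j f x‖^2)
          * Real.sqrt (∑ j : Fin n, ‖Vop c j h x‖^2) := hb
      _ ≤ gradLen f x * (s * Real.sqrt (∑ σ : Fin n → Bool,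
            mw c σ * ‖h (act x σ)‖^2)) := by
          rw [hcq]
          exact mul_le_mul_of_nonneg_left hd (Real.sqrt_nonneg _)
  have hup : ‖∑ j : Fin n, (∑ x : Fin n → Bool, pd j f x * Vop c j h x)/2^n‖
      ≤ s * ((∑ x : Fin n → Bool, gradLen f x
          * Real.sqrt (∑ σ : Fin n → Bool, mw c σ * ‖h (act x σ)‖^2)) / 2^n) := by
    rw [hswap, norm_div, norm_pow, Complex.norm_two]
    have hAB : ‖∑ x : Fin n → Bool, ∑ j : Fin n, pd j f x * Vop c j h x‖
        ≤ s * ∑ x : Fin n → Bool, gradLen f x * Real.sqrt (∑ σ : Fin n → Bool,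
            mw c σ * ‖h (act x σ)‖^2) := by
      calc ‖∑ x : Fin n → Bool, ∑ j : Fin n, pd j f x * Vop c j h x‖
          ≤ ∑ x : Fin n → Bool, ‖∑ j : Fin n, pd j f x * Vop c j h x‖ :=
            norm_sum_le _ _
        _ ≤ ∑ x : Fin n → Bool, gradLen f x * (s * Real.sqrt (∑ σ : Fin n → Bool,
              mw c σ * ‖h (act x σ)‖^2)) :=
            Finset.sum_le_sum fun x _ => hpt x
        _ = s * ∑ x : Fin n → Bool, gradLen f x * Real.sqrt (∑ σ : Fin n → Bool,
              mw c σ * ‖h (act x σ)‖^2) := by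
            rw [Finset.mul_sum]
            exact Finset.sum_congr rfl fun x _ => by ring
    calc ‖∑ x : Fin n → Bool, ∑ j : Fin n, pd j f x * Vop c j h x‖ / 2^n
        ≤ (s * ∑ x : Fin n → Bool, gradLen f x * Real.sqrt (∑ σ : Fin n → Bool,
            mw c σ * ‖h (act x σ)‖^2)) / 2^n := by
          exact div_le_div_of_nonneg_right hAB (by positivity)
      _ = s * ((∑ x : Fin n → Bool, gradLen f x * Real.sqrt (∑ σ : Fin n → Bool,
            mw c σ * ‖h (act x σ)‖^2)) / 2^n) := by ring
  rw [← habs] at hup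
  set a := ‖∑ A : Finset (Fin n),
      (((A.card : ℝ) * c^(A.card - 1) * s : ℝ) : ℂ) * (coeff f A * coeff h A)‖ with ha
  set X := (∑ x : Fin n → Bool, gradLen f x
      * Real.sqrt (∑ σ : Fin n → Bool, mw c σ * ‖h (act x σ)‖^2)) / 2^n with hX
  rw [show 2*s*a = s*(2*a) from by ring] at hup
  have hcancel : 2*a ≤ X := (mul_le_mul_iff_right₀ hspos).mp hup
  linarith

lemma est_bound (p : ℝ) (hp1 : 1 ≤ p) (hp2 : p ≤ 2) {c : ℝ} (hc : |c| ≤ 1)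
    (G : (Fin n → Bool) → ℝ) (hG : ∀ x, 0 ≤ G x) (g h : (Fin n → Bool) → ℂ)
    (hh : ∀ x, ‖h x‖ ≤ (‖g x‖)^(p-1)) :
    (∑ x : Fin n → Bool, G x
        * Real.sqrt (∑ σ : Fin n → Bool, mw c σ * ‖h (act x σ)‖^2)) / 2^n
      ≤ rLp p G * ((∑ x : Fin n → Bool, ‖g x‖^p) / 2^n)^(1 - 1/p) := by
  have hM0 : ∀ x : Fin n → Bool,
      0 ≤ Real.sqrt (∑ σ : Fin n → Bool, mw c σ * ‖h (act x σ)‖^2) :=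
    fun x => Real.sqrt_nonneg _
  rcases eq_or_lt_of_le hp1 with hp1' | hp1'
  · -- p = 1
    subst hp1'
    have hM1 : ∀ x : Fin n → Bool,
        Real.sqrt (∑ σ : Fin n → Bool, mw c σ * ‖h (act x σ)‖^2) ≤ 1 := by
      intro x
      have hle : ∑ σ : Fin n → Bool, mw c σ * ‖h (act x σ)‖^2
          ≤ ∑ σ : Fin n → Bool, mw c σ := by
        refine Finset.sum_le_sum fun σ _ => ?_
        have h1 : ‖h (act x σ)‖ ≤ 1 := by
          have := hh (act x σ)
          rwa [sub_self, Real.rpow_zero] at this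
        have h2 : ‖h (act x σ)‖^2 ≤ 1 :=
          pow_le_one₀ (norm_nonneg _) h1
        calc mw c σ * ‖h (act x σ)‖^2 ≤ mw c σ * 1 :=
              mul_le_mul_of_nonneg_left h2 (mw_nonneg hc σ)
          _ = mw c σ := mul_one _
      calc Real.sqrt (∑ σ : Fin n → Bool, mw c σ * ‖h (act x σ)‖^2)
          ≤ Real.sqrt (∑ σ : Fin n → Bool, mw c σ) := Real.sqrt_le_sqrt hle
        _ = 1 := by rw [sum_mw, Real.sqrt_one]
    rw [show (1:ℝ) - 1/1 = 0 by norm_num, Real.rpow_zero, mul_one]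
    unfold rLp
    rw [show (1:ℝ)/1 = 1 by norm_num, Real.rpow_one]
    have h3 : ∑ x : Fin n → Bool, G x
        * Real.sqrt (∑ σ : Fin n → Bool, mw c σ * ‖h (act x σ)‖^2)
        ≤ ∑ x : Fin n → Bool, |G x| ^ (1:ℝ) := by
      refine Finset.sum_le_sum fun x _ => ?_
      rw [Real.rpow_one, abs_of_nonneg (hG x)]
      calc G x * Real.sqrt (∑ σ : Fin n → Bool, mw c σ * ‖h (act x σ)‖^2)
          ≤ G x * 1 := mul_le_mul_of_nonneg_left (hM1 x) (hG x)
        _ = G x := mul_one _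
    exact div_le_div_of_nonneg_right h3 (by positivity)
  · -- 1 < p
    set q : ℝ := p/(p-1) with hqdef
    have hp0 : 0 < p := lt_trans zero_lt_one hp1'
    have hpm1 : 0 < p - 1 := by linarith
    have hpq : Real.HolderConjugate p q := by
      rw [Real.holderConjugate_iff]
      constructor
      · exact hp1'
      · rw [hqdef]
        field_simp
        ring
    have hq0 : 0 < q := by rw [hqdef]; positivity
    have hq2 : 2 ≤ q := by
      rw [hqdef, le_div_iff₀ hpm1]
      linarith
    have h1q : 1/q = 1 - 1/p := by
      have := hpq.inv_add_inv_eq_one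
      rw [inv_eq_one_div, inv_eq_one_div] at this
      linarith
    have hpq1 : (p-1)*q = p := by
      rw [hqdef]
      field_simp
    set t : ℝ := ((2:ℝ)^n)⁻¹ with htdef
    have ht : 0 < t := by positivity
    set M : (Fin n → Bool) → ℝ :=
      fun x => Real.sqrt (∑ σ : Fin n → Bool, mw c σ * ‖h (act x σ)‖^2) with hMdef
    -- Hölder
    have hold := Real.inner_le_Lp_mul_Lq_of_nonneg Finset.univ hpq
      (f := fun x : Fin n → Bool => G x * t^(1/p)) (g := fun x : Fin n → Bool => M x * t^(1/q))
      (fun x _ => mul_nonneg (hG x) (Real.rpow_nonneg ht.le _))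
      (fun x _ => mul_nonneg (hM0 x) (Real.rpow_nonneg ht.le _))
    have hA : ∑ x : Fin n → Bool, (G x * t^(1/p)) * (M x * t^(1/q))
        = (∑ x : Fin n → Bool, G x * M x) * t := by
      rw [Finset.sum_mul]
      refine Finset.sum_congr rfl fun x _ => ?_
      rw [show (G x * t^(1/p)) * (M x * t^(1/q)) = G x * M x * (t^(1/p) * t^(1/q)) from by ring,
        ← Real.rpow_add ht, show 1/p + 1/q = 1 from by
          rw [one_div, one_div]; exact hpq.inv_add_inv_eq_one, Real.rpow_one]
    have hB : (∑ x : Fin n → Bool, (G x * t^(1/p))^p)^(1/p) = rLp p G := by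
      have hBs : ∀ x : Fin n → Bool, (G x * t^(1/p))^p = |G x|^p * t := by
        intro x
        rw [Real.mul_rpow (hG x) (Real.rpow_nonneg ht.le _),
          ← Real.rpow_mul ht.le, one_div_mul_cancel (ne_of_gt hp0), Real.rpow_one,
          abs_of_nonneg (hG x)]
      rw [Finset.sum_congr rfl fun x _ => hBs x, ← Finset.sum_mul]
      unfold rLp
      rw [show (∑ x : Fin n → Bool, |G x|^p) * t = (∑ x : Fin n → Bool, |G x|^p)/2^n from by
        rw [htdef, div_eq_mul_inv]]
    have hC : (∑ x : Fin n → Bool, (M x * t^(1/q))^q)^(1/q)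
        ≤ ((∑ x : Fin n → Bool, ‖g x‖^p) * t)^(1/q) := by
      refine Real.rpow_le_rpow ?_ ?_ (by positivity)
      · refine Finset.sum_nonneg fun x _ => ?_
        exact Real.rpow_nonneg (mul_nonneg (hM0 x) (Real.rpow_nonneg ht.le _)) _
      have hCs : ∀ x : Fin n → Bool, (M x * t^(1/q))^q = M x^q * t := by
        intro x
        rw [Real.mul_rpow (hM0 x) (Real.rpow_nonneg ht.le _),
          ← Real.rpow_mul ht.le, one_div_mul_cancel (ne_of_gt hq0), Real.rpow_one]
      rw [Finset.sum_congr rfl fun x _ => hCs x, ← Finset.sum_mul]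
      refine mul_le_mul_of_nonneg_right ?_ ht.le
      -- ∑ M^q ≤ ∑ |g|^p
      have hMq : ∀ x : Fin n → Bool, M x^q
          ≤ ∑ σ : Fin n → Bool, mw c σ * ‖h (act x σ)‖^q := by
        intro x
        have hS0 : 0 ≤ ∑ σ : Fin n → Bool, mw c σ * ‖h (act x σ)‖^2 :=
          Finset.sum_nonneg fun σ _ => mul_nonneg (mw_nonneg hc σ) (sq_nonneg _)
        have hMx : M x ^ q = (∑ σ : Fin n → Bool,
            mw c σ * ‖h (act x σ)‖^2)^(q/2) := by
          simp only [hMdef]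
          rw [Real.sqrt_eq_rpow, ← Real.rpow_mul hS0,
            show (1:ℝ)/2*q = q/2 from by ring]
        have hjen := Real.rpow_arith_mean_le_arith_mean_rpow Finset.univ (fun σ => mw c σ)
          (fun σ => ‖h (act x σ)‖^2) (fun σ _ => mw_nonneg hc σ) (sum_mw c)
          (fun σ _ => sq_nonneg _) (by linarith : 1 ≤ q/2)
        have hpow : ∀ σ : Fin n → Bool, (‖h (act x σ)‖^2)^(q/2)
            = ‖h (act x σ)‖^q := by
          intro σ
          rw [← Real.rpow_natCast (‖h (act x σ)‖) 2,
            ← Real.rpow_mul (norm_nonneg _)]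
          congr 1
          push_cast
          ring
        rw [hMx]
        refine le_trans hjen (le_of_eq ?_)
        exact Finset.sum_congr rfl fun σ _ => by rw [hpow σ]
      have hsum2 : ∑ x : Fin n → Bool, ∑ σ : Fin n → Bool,
          mw c σ * ‖h (act x σ)‖^q = ∑ x : Fin n → Bool, ‖h x‖^q := by
        rw [Finset.sum_comm]
        have : ∀ σ : Fin n → Bool, ∑ x : Fin n → Bool, mw c σ * ‖h (act x σ)‖^q
            = mw c σ * ∑ x : Fin n → Bool, ‖h x‖^q := by
          intro σ
          rw [← Finset.mul_sum]
          congr 1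
          exact sum_act σ (fun y => ‖h y‖^q)
        rw [Finset.sum_congr rfl fun σ _ => this σ, ← Finset.sum_mul, sum_mw, one_mul]
      have hhq : ∀ x : Fin n → Bool, ‖h x‖^q ≤ ‖g x‖^p := by
        intro x
        calc ‖h x‖^q ≤ ((‖g x‖)^(p-1))^q :=
              Real.rpow_le_rpow (norm_nonneg _) (hh x) hq0.le
          _ = ‖g x‖^p := by
              rw [← Real.rpow_mul (norm_nonneg _), hpq1]
      calc ∑ x : Fin n → Bool, M x^q
          ≤ ∑ x : Fin n → Bool, ∑ σ : Fin n → Bool,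
              mw c σ * ‖h (act x σ)‖^q := Finset.sum_le_sum fun x _ => hMq x
        _ = ∑ x : Fin n → Bool, ‖h x‖^q := hsum2
        _ ≤ ∑ x : Fin n → Bool, ‖g x‖^p := Finset.sum_le_sum fun x _ => hhq x
    -- combine
    rw [hA] at hold
    calc (∑ x : Fin n → Bool, G x * M x) / 2^n
        = (∑ x : Fin n → Bool, G x * M x) * t := by rw [htdef, div_eq_mul_inv]
      _ ≤ (∑ x : Fin n → Bool, (G x * t^(1/p))^p)^(1/p)
          * (∑ x : Fin n → Bool, (M x * t^(1/q))^q)^(1/q) := hold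
      _ ≤ rLp p G * ((∑ x : Fin n → Bool, ‖g x‖^p) * t)^(1/q) := by
          rw [hB]
          refine mul_le_mul_of_nonneg_left hC ?_
          unfold rLp
          positivity
      _ = rLp p G * ((∑ x : Fin n → Bool, ‖g x‖^p) / 2^n)^(1 - 1/p) := by
          rw [← h1q, htdef,
            div_eq_mul_inv (∑ x : Fin n → Bool, ‖g x‖^p) ((2:ℝ)^n)]

end DiscreteCube

open DiscreteCube

/-- For every `n ≥ 1`, `1 ≤ p ≤ 2`, `θ₀ ∈ [0, π/2)` and `f : Ω_n → ℂ`,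
`‖f − cos^{Δ/4}θ₀(f)‖_p ≤ (θ₀/2) ‖ |∇f| ‖_p`. -/
theorem cube_semigroup_poincare (n : ℕ) (hn : 1 ≤ n) (p : ℝ) (hp1 : 1 ≤ p) (hp2 : p ≤ 2)
    (θ₀ : ℝ) (hθ0 : 0 ≤ θ₀) (hθ1 : θ₀ < π / 2) (f : (Fin n → Bool) → ℂ) :
    cLp p (fun x => f x - cosD θ₀ f x) ≤ (θ₀ / 2) * rLp p (gradLen f) := by
  classical
  have hp0 : 0 < p := lt_of_lt_of_le zero_lt_one hp1
  set g : (Fin n → Bool) → ℂ := fun x => f x - cosD θ₀ f x with hg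
  set R : ℝ := rLp p (gradLen f) with hR
  have hR0 : 0 ≤ R := by
    rw [hR]; unfold rLp; positivity
  set N : ℝ := ∑ x : Fin n → Bool, ‖g x‖^p with hN
  set E : ℝ := N / 2^n with hE
  have hN0 : 0 ≤ N := Finset.sum_nonneg fun x _ => Real.rpow_nonneg (norm_nonneg _) _
  have hE0 : 0 ≤ E := by rw [hE]; positivity
  set D : ℝ := E^(1 - 1/p) with hD
  have hD0 : 0 ≤ D := Real.rpow_nonneg hE0 _
  set h : (Fin n → Bool) → ℂ := fun x =>
    if g x = 0 then 0 else (starRingEnd ℂ) (g x) * ((‖g x‖^(p-2) : ℝ) : ℂ) with hhdef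
  have hgh : ∀ x, g x * h x = ((‖g x‖^p : ℝ) : ℂ) := by
    intro x
    simp only [hhdef]
    by_cases h0 : g x = 0
    · rw [if_pos h0, mul_zero, h0, norm_zero, Real.zero_rpow (ne_of_gt hp0),
        Complex.ofReal_zero]
    · rw [if_neg h0]
      have habs : 0 < ‖g x‖ := norm_pos_iff.mpr h0
      rw [show g x * ((starRingEnd ℂ) (g x) * ((‖g x‖^(p-2) : ℝ) : ℂ))
          = (g x * (starRingEnd ℂ) (g x)) * ((‖g x‖^(p-2) : ℝ) : ℂ) from by ring,
        Complex.mul_conj,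
        show ((Complex.normSq (g x) : ℝ) : ℂ) = ((‖g x‖^2 : ℝ) : ℂ) from by
          norm_cast
          exact (Complex.sq_norm _).symm,
        ← Complex.ofReal_mul]
      congr 1
      rw [← Real.rpow_natCast (‖g x‖) 2, ← Real.rpow_add habs]
      congr 1
      push_cast
      ring
  have hhabs : ∀ x, ‖h x‖ ≤ ‖g x‖^(p-1) := by
    intro x
    simp only [hhdef]
    by_cases h0 : g x = 0
    · rw [if_pos h0, norm_zero]
      exact Real.rpow_nonneg (norm_nonneg _) _
    · rw [if_neg h0]
      have habs : 0 < ‖g x‖ := norm_pos_iff.mpr h0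
      rw [norm_mul, Complex.norm_conj, Complex.norm_real, Real.norm_eq_abs,
        abs_of_nonneg (Real.rpow_nonneg (norm_nonneg _) _)]
      refine le_of_eq ?_
      rw [show p - 1 = 1 + (p-2) from by ring, Real.rpow_add habs, Real.rpow_one]
  have hpairN : (∑ x : Fin n → Bool, g x * h x) / 2^n = ((E : ℝ) : ℂ) := by
    rw [Finset.sum_congr rfl fun x _ => hgh x, ← Complex.ofReal_sum, ← hN, hE,
      Complex.ofReal_div]
    norm_cast
  have hEle : E ≤ θ₀/2 * (R * D) := by
    have hrep := pair_g_h θ₀ f h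
    have hrep2 : (∑ x : Fin n → Bool, g x * h x) / 2^n
        = ∫ θ in (0:ℝ)..θ₀, ∑ A : Finset (Fin n),
            (((A.card : ℝ) * (Real.cos θ)^(A.card - 1) * Real.sin θ : ℝ) : ℂ)
              * (coeff f A * coeff h A) := by
      rw [← hrep]
    have habsle : ‖∫ θ in (0:ℝ)..θ₀, ∑ A : Finset (Fin n),
        (((A.card : ℝ) * (Real.cos θ)^(A.card - 1) * Real.sin θ : ℝ) : ℂ)
          * (coeff f A * coeff h A)‖ ≤ (1/2 * (R * D)) * |θ₀ - 0| := by
      apply intervalIntegral.norm_integral_le_of_norm_le_const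
      intro θ hθ
      rw [Set.uIoc_of_le hθ0] at hθ
      obtain ⟨hθa, hθb⟩ := hθ
      have hθc : θ < π/2 := lt_of_le_of_lt hθb hθ1
      have hsin : 0 < Real.sin θ :=
        Real.sin_pos_of_pos_of_lt_pi hθa (by linarith [Real.pi_pos])
      have hcos : |Real.cos θ| ≤ 1 := Real.abs_cos_le_one θ
      have hcs : 1 - (Real.cos θ)^2 = (Real.sin θ)^2 := by
        have := Real.sin_sq_add_cos_sq θ
        linarith
      have hcore := core_bound f h hsin hcs hcos
      have hest := est_bound p hp1 hp2 hcos (gradLen f)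
        (fun x => Real.sqrt_nonneg _) g h hhabs
      have hRD : rLp p (gradLen f)
          * ((∑ x : Fin n → Bool, ‖g x‖^p) / 2^n)^(1 - 1/p) = R * D := by
        rw [hR, hD, hE, hN]
      rw [hRD] at hest
      calc ‖∑ A : Finset (Fin n),
          (((A.card : ℝ) * (Real.cos θ)^(A.card - 1) * Real.sin θ : ℝ) : ℂ)
            * (coeff f A * coeff h A)‖
          = ‖∑ A : Finset (Fin n),
            (((A.card : ℝ) * (Real.cos θ)^(A.card - 1) * Real.sin θ : ℝ) : ℂ)
              * (coeff f A * coeff h A)‖ := rfl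
        _ ≤ (1/2) * ((∑ x : Fin n → Bool, gradLen f x
              * Real.sqrt (∑ σ : Fin n → Bool,
                  mw (Real.cos θ) σ * ‖h (act x σ)‖^2)) / 2^n) := hcore
        _ ≤ (1/2) * (R * D) := by linarith
    have hEabs : E = ‖((E : ℝ) : ℂ)‖ := by
      rw [Complex.norm_real, Real.norm_eq_abs, abs_of_nonneg hE0]
    calc E = ‖((E : ℝ) : ℂ)‖ := hEabs
      _ = ‖∫ θ in (0:ℝ)..θ₀, ∑ A : Finset (Fin n),
            (((A.card : ℝ) * (Real.cos θ)^(A.card - 1) * Real.sin θ : ℝ) : ℂ)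
              * (coeff f A * coeff h A)‖ := by rw [← hpairN, hrep2]
      _ ≤ (1/2 * (R * D)) * |θ₀ - 0| := habsle
      _ = θ₀/2 * (R * D) := by
          rw [sub_zero, abs_of_nonneg hθ0]
          ring
  have hLHS : cLp p g = E^(1/p) := by
    unfold cLp
    rw [← hN, ← hE]
  rw [hLHS]
  rcases eq_or_lt_of_le hE0 with hE0' | hEpos
  · rw [← hE0', Real.zero_rpow (by positivity : (1:ℝ)/p ≠ 0)]
    exact mul_nonneg (by linarith) hR0
  · have hDpos : 0 < D := Real.rpow_pos_of_pos hEpos _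
    have h1 : E^(1/p) = E / D := by
      rw [eq_div_iff (ne_of_gt hDpos), hD, ← Real.rpow_add hEpos,
        show 1/p + (1 - 1/p) = 1 from by ring, Real.rpow_one]
    rw [h1, div_le_iff₀ hDpos]
    calc E ≤ θ₀/2 * (R * D) := hEle
      _ = θ₀/2 * R * D := by ring
end

section
/- For every n ≥ 1, every nonconstant function f : Ω_n → ℂ and every t > 0, the uniform probability measure of the set {x ∈ Ω_n : |f(x) − 𝔼f| > t} is at most 2 exp(−8t²/(π² ‖ |∇f| ‖_∞²)). -/
open Real Finset

namespace DiscreteCube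

/-- `L^∞` norm of a real-valued function on the cube. -/
noncomputable def rLinf {n : ℕ} (g : (Fin n → Bool) → ℝ) : ℝ :=
  ⨆ x : Fin n → Bool, |g x|

end DiscreteCube

open DiscreteCube

namespace CubeProof
open DiscreteCube
variable {n : ℕ}

/-- real sign -/
def e (b : Bool) : ℝ := if b then 1 else -1

lemma sgn_eq (b : Bool) : sgn b = ((e b : ℝ) : ℂ) := by cases b <;> simp [sgn, e]
lemma e_mul_self (b : Bool) : e b * e b = 1 := by cases b <;> norm_num [e]
lemma sgn_mul_self (b : Bool) : sgn b * sgn b = 1 := by cases b <;> norm_num [sgn]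
lemma sgn_not (b : Bool) : sgn (!b) = - sgn b := by cases b <;> norm_num [sgn]
lemma conj_sgn (b : Bool) : (starRingEnd ℂ) (sgn b) = sgn b := by cases b <;> simp [sgn]
lemma abs_e_le (b : Bool) : |e b| ≤ 1 := by cases b <;> norm_num [e]
lemma norm_sgn (b : Bool) : ‖sgn b‖ = 1 := by cases b <;> norm_num [sgn]
lemma sgn_true_add_false : sgn true + sgn false = 0 := by norm_num [sgn]

lemma flip_apply_self (j : Fin n) (x : Fin n → Bool) : DiscreteCube.flip j x j = !(x j) :=
  Function.update_self j _ x
lemma flip_apply_ne (j k : Fin n) (x : Fin n → Bool) (h : k ≠ j) : DiscreteCube.flip j x k = x k :=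
  Function.update_of_ne h _ x
lemma flip_involutive (j : Fin n) : Function.Involutive (DiscreteCube.flip (n := n) j) := by
  intro x
  funext k
  rcases eq_or_ne k j with rfl | h
  · rw [flip_apply_self, flip_apply_self, Bool.not_not]
  · rw [flip_apply_ne _ _ _ h, flip_apply_ne _ _ _ h]

lemma sum_flip {M : Type*} [AddCommMonoid M] (j : Fin n) (F : (Fin n → Bool) → M) :
    ∑ x : Fin n → Bool, F (DiscreteCube.flip j x) = ∑ x : Fin n → Bool, F x :=
  Equiv.sum_comp ((flip_involutive j).toPerm _) F

/-- master factorization -/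
lemma sum_cube_prod {α : Type*} [CommSemiring α] (F : Fin n → Bool → α) :
    ∑ x : Fin n → Bool, ∏ j, F j (x j) = ∏ j, (F j true + F j false) := by
  calc ∑ x : Fin n → Bool, ∏ j, F j (x j)
      = ∑ x ∈ Fintype.piFinset (fun _ : Fin n => (univ : Finset Bool)), ∏ j, F j (x j) := by
        rw [Fintype.piFinset_univ]
    _ = ∏ j, ∑ b : Bool, F j b := (Finset.prod_univ_sum _ _).symm
    _ = ∏ j, (F j true + F j false) := by simp [Fintype.sum_bool]

lemma card_cube : (Fintype.card (Fin n → Bool)) = 2 ^ n := by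
  simp [Fintype.card_fun]

def wS (S : Finset (Fin n)) (x : Fin n → Bool) : ℂ := ∏ j ∈ S, sgn (x j)

lemma wS_empty (x : Fin n → Bool) : wS ∅ x = 1 := by simp [wS]

lemma conj_wS (S : Finset (Fin n)) (x : Fin n → Bool) :
    (starRingEnd ℂ) (wS S x) = wS S x := by
  simp only [wS, map_prod]
  exact Finset.prod_congr rfl fun j _ => conj_sgn _

lemma wS_eq_prod_univ (S : Finset (Fin n)) (x : Fin n → Bool) :
    wS S x = ∏ j, (if j ∈ S then sgn (x j) else 1) := by
  rw [Finset.prod_ite_mem, Finset.univ_inter, wS]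

lemma wS_flip (S : Finset (Fin n)) (j : Fin n) (x : Fin n → Bool) :
    wS S (DiscreteCube.flip j x) = (if j ∈ S then -1 else 1) * wS S x := by
  by_cases hj : j ∈ S
  · simp only [hj, if_true]
    rw [wS, wS, ← Finset.prod_erase_mul _ _ hj, ← Finset.prod_erase_mul _ _ hj]
    have h1 : ∏ k ∈ S.erase j, sgn (DiscreteCube.flip j x k) = ∏ k ∈ S.erase j, sgn (x k) :=
      Finset.prod_congr rfl fun k hk => by
        rw [flip_apply_ne j k x (Finset.ne_of_mem_erase hk)]
    rw [h1, flip_apply_self, sgn_not]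
    ring
  · simp only [hj, if_false, one_mul]
    exact Finset.prod_congr rfl fun k hk => by
      rw [flip_apply_ne j k x (by rintro rfl; exact hj hk)]

noncomputable def Ex (u : (Fin n → Bool) → ℂ) : ℂ := (∑ x : Fin n → Bool, u x) / 2 ^ n

lemma Ex_wS_mul_wS (S T : Finset (Fin n)) :
    Ex (fun x => wS S x * wS T x) = if S = T then 1 else 0 := by
  have key : ∑ x : Fin n → Bool, wS S x * wS T x
      = ∏ j : Fin n, ((if j ∈ S then sgn true else 1) * (if j ∈ T then sgn true else 1)
          + (if j ∈ S then sgn false else 1) * (if j ∈ T then sgn false else 1)) := by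
    have : ∀ x : Fin n → Bool, wS S x * wS T x
        = ∏ j, ((if j ∈ S then sgn (x j) else 1) * (if j ∈ T then sgn (x j) else 1)) := by
      intro x
      rw [wS_eq_prod_univ, wS_eq_prod_univ, ← Finset.prod_mul_distrib]
    simp only [this]
    exact sum_cube_prod (fun j b => (if j ∈ S then sgn b else 1) * (if j ∈ T then sgn b else 1))
  rcases eq_or_ne S T with rfl | hST
  · simp only [if_pos rfl, ↓reduceIte]
    have : ∀ j : Fin n, ((if j ∈ S then sgn true else 1) * (if j ∈ S then sgn true else 1)
          + (if j ∈ S then sgn false else 1) * (if j ∈ S then sgn false else 1)) = 2 := by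
      intro j
      by_cases hj : j ∈ S <;> simp [hj, sgn] <;> norm_num
    rw [Ex, key, Finset.prod_congr rfl (fun j _ => this j), Finset.prod_const, Finset.card_univ, Fintype.card_fin]
    field_simp
  · simp only [if_neg hST]
    obtain ⟨j, hj⟩ : ∃ j, ¬((j ∈ S) ↔ (j ∈ T)) := by
      by_contra h
      push_neg at h
      exact hST (Finset.ext fun j => (h j))
    have hz : ((if j ∈ S then sgn true else 1) * (if j ∈ T then sgn true else 1)
          + (if j ∈ S then sgn false else 1) * (if j ∈ T then sgn false else 1)) = 0 := by
      by_cases h1 : j ∈ S <;> by_cases h2 : j ∈ T <;>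
        simp [h1, h2, sgn] at hj ⊢ <;> norm_num
    rw [Ex, key, Finset.prod_eq_zero (Finset.mem_univ j) hz, zero_div]

noncomputable def cf (f : (Fin n → Bool) → ℂ) (S : Finset (Fin n)) : ℂ :=
  Ex (fun x => f x * wS S x)

lemma Ex_sum {ι : Type*} (s : Finset ι) (g : ι → (Fin n → Bool) → ℂ) :
    Ex (fun x => ∑ i ∈ s, g i x) = ∑ i ∈ s, Ex (g i) := by
  unfold Ex
  rw [Finset.sum_comm, ← Finset.sum_div]

lemma Ex_const_mul (c : ℂ) (u : (Fin n → Bool) → ℂ) :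
    Ex (fun x => c * u x) = c * Ex u := by
  unfold Ex
  rw [← Finset.mul_sum, mul_div_assoc]

lemma Ex_conj (u : (Fin n → Bool) → ℂ) :
    (starRingEnd ℂ) (Ex u) = Ex (fun x => (starRingEnd ℂ) (u x)) := by
  unfold Ex
  rw [map_div₀, map_sum, map_pow, map_ofNat]

lemma cf_combo (a : Finset (Fin n) → ℂ) (S : Finset (Fin n)) :
    cf (fun x => ∑ T : Finset (Fin n), a T * wS T x) S = a S := by
  unfold cf
  have : (fun x => (∑ T : Finset (Fin n), a T * wS T x) * wS S x)
      = fun x => ∑ T : Finset (Fin n), a T * (wS T x * wS S x) := by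
    funext x
    rw [Finset.sum_mul]
    exact Finset.sum_congr rfl fun T _ => by ring
  rw [this, Ex_sum]
  have : ∀ T : Finset (Fin n), Ex (fun x => a T * (wS T x * wS S x))
      = a T * (if T = S then 1 else 0) := by
    intro T
    rw [Ex_const_mul, Ex_wS_mul_wS]
  rw [Finset.sum_congr rfl fun T _ => this T]
  simp

lemma kernel_eq (x y : Fin n → Bool) :
    ∑ S : Finset (Fin n), wS S y * wS S x = ∏ j, (1 + sgn (y j) * sgn (x j)) := by
  have h := Finset.prod_add (fun j : Fin n => sgn (y j) * sgn (x j))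
      (fun _ => (1 : ℂ)) Finset.univ
  rw [Finset.powerset_univ] at h
  have h2 : ∀ S : Finset (Fin n), (∏ j ∈ S, sgn (y j) * sgn (x j)) * (∏ _j ∈ univ \ S, (1:ℂ))
      = wS S y * wS S x := by
    intro S
    rw [Finset.prod_const_one, mul_one, Finset.prod_mul_distrib, wS, wS]
  calc ∑ S : Finset (Fin n), wS S y * wS S x
      = ∑ S : Finset (Fin n), (∏ j ∈ S, sgn (y j) * sgn (x j)) * (∏ _j ∈ univ \ S, (1:ℂ)) :=
        (Finset.sum_congr rfl fun S _ => (h2 S).symm)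
    _ = ∏ j, (sgn (y j) * sgn (x j) + 1) := h.symm
    _ = ∏ j, (1 + sgn (y j) * sgn (x j)) := by
        exact Finset.prod_congr rfl fun j _ => by ring

lemma kernel_delta (x y : Fin n → Bool) :
    ∑ S : Finset (Fin n), wS S y * wS S x = if y = x then (2:ℂ)^n else 0 := by
  rw [kernel_eq]
  rcases eq_or_ne y x with rfl | hxy
  · rw [if_pos rfl]
    have : ∀ j : Fin n, (1 + sgn (y j) * sgn (y j)) = 2 := by
      intro j; rw [sgn_mul_self]; norm_num
    rw [Finset.prod_congr rfl fun j _ => this j, Finset.prod_const, Finset.card_univ,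
      Fintype.card_fin]
  · simp only [if_neg hxy]
    obtain ⟨j, hj⟩ : ∃ j, y j ≠ x j := by
      by_contra h
      push_neg at h
      exact hxy (funext h)
    apply Finset.prod_eq_zero (Finset.mem_univ j)
    revert hj
    cases (y j) <;> cases (x j) <;> simp [sgn] <;> norm_num

lemma inv_expand (f : (Fin n → Bool) → ℂ) (x : Fin n → Bool) :
    ∑ S : Finset (Fin n), cf f S * wS S x = f x := by
  unfold cf Ex
  have : ∀ S : Finset (Fin n), (∑ y : Fin n → Bool, f y * wS S y) / 2 ^ n * wS S x
      = ∑ y : Fin n → Bool, f y * (wS S y * wS S x) / 2 ^ n := by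
    intro S
    rw [div_mul_eq_mul_div, Finset.sum_mul, Finset.sum_div]
    exact Finset.sum_congr rfl fun y _ => by ring
  rw [Finset.sum_congr rfl fun S _ => this S, Finset.sum_comm]
  have : ∀ y : Fin n → Bool, ∑ S : Finset (Fin n), f y * (wS S y * wS S x) / 2 ^ n
      = f y * (if y = x then (2:ℂ)^n else 0) / 2^n := by
    intro y
    rw [← kernel_delta x y, Finset.mul_sum, Finset.sum_div]
  rw [Finset.sum_congr rfl fun y _ => this y]
  rw [Finset.sum_eq_single_of_mem x (Finset.mem_univ x)]
  · rw [if_pos rfl]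
    field_simp
  · intro y _ hy
    rw [if_neg hy]
    simp

noncomputable def Dj (j : Fin n) (u : (Fin n → Bool) → ℂ) : (Fin n → Bool) → ℂ :=
  fun x => (u x - u (DiscreteCube.flip j x)) / 2

lemma Dj_flip (j : Fin n) (u : (Fin n → Bool) → ℂ) (x : Fin n → Bool) :
    Dj j u (DiscreteCube.flip j x) = - Dj j u x := by
  unfold Dj
  rw [flip_involutive j x]
  ring

lemma Dj_eq_pd (j : Fin n) (u : (Fin n → Bool) → ℂ) (x : Fin n → Bool) :
    Dj j u x = pd j u x / 2 := rfl

lemma Dj_expand (j : Fin n) (u : (Fin n → Bool) → ℂ) (x : Fin n → Bool) :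
    Dj j u x = ∑ S : Finset (Fin n), (if j ∈ S then cf u S else 0) * wS S x := by
  unfold Dj
  conv_lhs => rw [← inv_expand u x, ← inv_expand u (DiscreteCube.flip j x)]
  rw [← Finset.sum_sub_distrib, Finset.sum_div]
  refine Finset.sum_congr rfl fun S _ => ?_
  rw [wS_flip]
  by_cases hj : j ∈ S <;> simp [hj] <;> ring

noncomputable def gc (f : (Fin n → Bool) → ℂ) (S : Finset (Fin n)) : ℂ :=
  if S = ∅ then 0 else cf f S / S.card

noncomputable def Gf (f : (Fin n → Bool) → ℂ) : (Fin n → Bool) → ℂ :=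
  fun x => ∑ S : Finset (Fin n), gc f S * wS S x

lemma cf_Gf (f : (Fin n → Bool) → ℂ) (S : Finset (Fin n)) : cf (Gf f) S = gc f S :=
  cf_combo (gc f) S

lemma Dj_Gf_expand (f : (Fin n → Bool) → ℂ) (j : Fin n) (x : Fin n → Bool) :
    Dj j (Gf f) x = ∑ S : Finset (Fin n), (if j ∈ S then gc f S else 0) * wS S x := by
  rw [Dj_expand]
  exact Finset.sum_congr rfl fun S _ => by rw [cf_Gf]

lemma cf_empty (f : (Fin n → Bool) → ℂ) : cf f ∅ = DiscreteCube.expect f := by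
  unfold cf DiscreteCube.expect Ex
  simp [wS_empty]

lemma Ex_conj_pair (a : Finset (Fin n) → ℂ) (u : (Fin n → Bool) → ℂ) :
    Ex (fun x => (∑ T : Finset (Fin n), a T * wS T x) * (starRingEnd ℂ) (u x))
      = ∑ T : Finset (Fin n), a T * (starRingEnd ℂ) (cf u T) := by
  have : (fun x => (∑ T : Finset (Fin n), a T * wS T x) * (starRingEnd ℂ) (u x))
      = fun x => ∑ T : Finset (Fin n), a T * (wS T x * (starRingEnd ℂ) (u x)) := by
    funext x
    rw [Finset.sum_mul]
    exact Finset.sum_congr rfl fun T _ => by ring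
  rw [this, Ex_sum]
  refine Finset.sum_congr rfl fun T _ => ?_
  rw [Ex_const_mul]
  congr 1
  have : (starRingEnd ℂ) (cf u T) = Ex (fun x => wS T x * (starRingEnd ℂ) (u x)) := by
    unfold cf
    rw [Ex_conj]
    congr 1
    funext x
    rw [map_mul, conj_wS]
    ring
  rw [this]

lemma g_expand (f : (Fin n → Bool) → ℂ) (x : Fin n → Bool) :
    f x - DiscreteCube.expect f = ∑ T : Finset (Fin n), (if T = ∅ then 0 else cf f T) * wS T x := by
  have h1 : f x = ∑ T : Finset (Fin n), cf f T * wS T x := (inv_expand f x).symm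
  have h2 : ∑ T : Finset (Fin n), cf f T * wS T x
      = cf f ∅ * wS ∅ x + ∑ T ∈ univ.erase ∅, cf f T * wS T x :=
    (Finset.add_sum_erase _ _ (Finset.mem_univ ∅)).symm
  have h3 : ∑ T : Finset (Fin n), (if T = ∅ then 0 else cf f T) * wS T x
      = (0:ℂ) + ∑ T ∈ univ.erase ∅, (if T = ∅ then 0 else cf f T) * wS T x := by
    rw [← Finset.add_sum_erase _ _ (Finset.mem_univ (∅ : Finset (Fin n)))]
    simp
  rw [h1, h2, h3, cf_empty, wS_empty, mul_one, zero_add, add_sub_cancel_left]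
  refine Finset.sum_congr rfl fun T hT => ?_
  rw [if_neg (Finset.ne_of_mem_erase hT)]

/-- Integration by parts through `Gf`. -/
lemma IBP (f h : (Fin n → Bool) → ℂ) :
    Ex (fun x => (f x - DiscreteCube.expect f) * (starRingEnd ℂ) (h x))
      = ∑ j : Fin n, Ex (fun x => Dj j (Gf f) x * (starRingEnd ℂ) (Dj j h x)) := by
  have cfDjh : ∀ (j : Fin n) (S : Finset (Fin n)),
      cf (Dj j h) S = if j ∈ S then cf h S else 0 := by
    intro j S
    have : Dj j h = fun x => ∑ T : Finset (Fin n), (if j ∈ T then cf h T else 0) * wS T x := by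
      funext x; exact Dj_expand j h x
    rw [this, cf_combo]
  have lhs_eq : Ex (fun x => (f x - DiscreteCube.expect f) * (starRingEnd ℂ) (h x))
      = ∑ T : Finset (Fin n), (if T = ∅ then 0 else cf f T) * (starRingEnd ℂ) (cf h T) := by
    have : (fun x => (f x - DiscreteCube.expect f) * (starRingEnd ℂ) (h x))
        = fun x => (∑ T : Finset (Fin n), (if T = ∅ then 0 else cf f T) * wS T x)
            * (starRingEnd ℂ) (h x) := by
      funext x
      rw [← g_expand]
    rw [this, Ex_conj_pair]
  have rhs_eq : ∀ j : Fin n, Ex (fun x => Dj j (Gf f) x * (starRingEnd ℂ) (Dj j h x))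
      = ∑ S : Finset (Fin n), (if j ∈ S then gc f S else 0)
          * (starRingEnd ℂ) (if j ∈ S then cf h S else 0) := by
    intro j
    have : (fun x => Dj j (Gf f) x * (starRingEnd ℂ) (Dj j h x))
        = fun x => (∑ S : Finset (Fin n), (if j ∈ S then gc f S else 0) * wS S x)
            * (starRingEnd ℂ) (Dj j h x) := by
      funext x
      rw [Dj_Gf_expand]
    rw [this, Ex_conj_pair]
    exact Finset.sum_congr rfl fun S _ => by rw [cfDjh]
  rw [lhs_eq, Finset.sum_congr rfl fun j _ => rhs_eq j, Finset.sum_comm]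
  refine Finset.sum_congr rfl fun S _ => ?_
  rcases eq_or_ne S ∅ with rfl | hS
  · simp
  · have hcard : (S.card : ℂ) ≠ 0 := by
      simp only [ne_eq, Nat.cast_eq_zero, Finset.card_eq_zero]
      exact hS
    have : ∀ j : Fin n, (if j ∈ S then gc f S else 0)
          * (starRingEnd ℂ) (if j ∈ S then cf h S else 0)
        = if j ∈ S then gc f S * (starRingEnd ℂ) (cf h S) else 0 := by
      intro j
      by_cases hj : j ∈ S <;> simp [hj]
    rw [Finset.sum_congr rfl fun j _ => this j, Finset.sum_ite_mem, Finset.univ_inter,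
      Finset.sum_const, nsmul_eq_mul]
    rw [if_neg hS, gc, if_neg hS]
    field_simp

/-! ### Kernel estimates -/

noncomputable def Sno (f : (Fin n → Bool) → ℂ) (ρ : ℝ) (j : Fin n) (x : Fin n → Bool) : ℂ :=
  ∑ S : Finset (Fin n), (if j ∈ S then cf f S * (ρ:ℂ)^(S.card - 1) else 0) * wS S x

def Kj (ρ : ℝ) (j : Fin n) (x y : Fin n → Bool) : ℝ :=
  ∏ k, (if k = j then (1 + e (x k) * e (y k)) else (1 + ρ * (e (x k) * e (y k))))

def Kp (ρ : ℝ) (j : Fin n) (x y : Fin n → Bool) : ℝ :=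
  ∏ k ∈ Finset.univ.erase j, (1 + ρ * (e (x k) * e (y k)))

def Kfull (ρ : ℝ) (x y : Fin n → Bool) : ℝ :=
  ∏ k, (1 + ρ * (e (x k) * e (y k)))

lemma e_mul_e_cases (a b : Bool) : e a * e b = 1 ∨ e a * e b = -1 := by
  cases a <;> cases b <;> norm_num [e]

lemma e_not (b : Bool) : e (!b) = - e b := by cases b <;> norm_num [e]

lemma Kj_nonneg {ρ : ℝ} (hρ0 : 0 ≤ ρ) (hρ1 : ρ ≤ 1) (j : Fin n) (x y : Fin n → Bool) :
    0 ≤ Kj ρ j x y := by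
  refine Finset.prod_nonneg fun k _ => ?_
  have hc := e_mul_e_cases (x k) (y k)
  by_cases hk : k = j
  · rw [if_pos hk]
    rcases hc with h | h <;> rw [h] <;> norm_num
  · rw [if_neg hk]
    rcases hc with h | h <;> rw [h] <;> nlinarith

lemma Kfull_nonneg {ρ : ℝ} (hρ0 : 0 ≤ ρ) (hρ1 : ρ ≤ 1) (x y : Fin n → Bool) :
    0 ≤ Kfull ρ x y := by
  refine Finset.prod_nonneg fun k _ => ?_
  rcases e_mul_e_cases (x k) (y k) with h | h <;> rw [h] <;> nlinarith

lemma Kfull_mass (ρ : ℝ) (x : Fin n → Bool) :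
    ∑ y : Fin n → Bool, Kfull ρ x y = 2^n := by
  unfold Kfull
  rw [sum_cube_prod (fun k b => (1 + ρ * (e (x k) * e b)))]
  have : ∀ k : Fin n, ((1 + ρ * (e (x k) * e true)) + (1 + ρ * (e (x k) * e false))) = 2 := by
    intro k
    cases (x k) <;> simp [e] <;> ring
  rw [Finset.prod_congr rfl fun k _ => this k, Finset.prod_const, Finset.card_univ,
    Fintype.card_fin]

lemma Kj_mass (ρ : ℝ) (j : Fin n) (x : Fin n → Bool) :
    ∑ y : Fin n → Bool, Kj ρ j x y = 2^n := by
  unfold Kj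
  rw [sum_cube_prod (fun k b => if k = j then (1 + e (x k) * e b) else (1 + ρ * (e (x k) * e b)))]
  have : ∀ k : Fin n, ((if k = j then (1 + e (x k) * e true) else (1 + ρ * (e (x k) * e true)))
      + (if k = j then (1 + e (x k) * e false) else (1 + ρ * (e (x k) * e false)))) = 2 := by
    intro k
    by_cases hk : k = j <;> cases (x k) <;> simp [hk, e] <;> ring
  rw [Finset.prod_congr rfl fun k _ => this k, Finset.prod_const, Finset.card_univ,
    Fintype.card_fin]

/-- The kernel representation of `Sno`. -/
lemma Sno_kernel (f : (Fin n → Bool) → ℂ) (ρ : ℝ) (j : Fin n) (x : Fin n → Bool) :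
    Sno f ρ j x = (∑ y : Fin n → Bool, (Kj ρ j x y : ℂ) * Dj j f y) / 2^n := by
  have key : ∀ S : Finset (Fin n), j ∈ S →
      ∑ y : Fin n → Bool, (Kj ρ j x y : ℂ) * wS S y
        = 2^n * ((ρ:ℂ)^(S.card - 1) * wS S x) := by
    intro S hjS
    have hint : ∀ y : Fin n → Bool, (Kj ρ j x y : ℂ) * wS S y
        = ∏ k, ((if k = j then (1 + (e (x k):ℂ) * (e (y k):ℂ))
            else (1 + (ρ:ℂ) * ((e (x k):ℂ) * (e (y k):ℂ)))) * (if k ∈ S then sgn (y k) else 1)) := by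
      intro y
      rw [wS_eq_prod_univ, Kj, Complex.ofReal_prod, ← Finset.prod_mul_distrib]
      refine Finset.prod_congr rfl fun k _ => ?_
      by_cases hk : k = j <;> simp only [hk, if_true, if_false] <;> push_cast <;> ring
    rw [Finset.sum_congr rfl fun y _ => hint y]
    rw [sum_cube_prod (fun k b => (if k = j then (1 + (e (x k):ℂ) * (e b:ℂ))
            else (1 + (ρ:ℂ) * ((e (x k):ℂ) * (e b:ℂ)))) * (if k ∈ S then sgn b else 1))]
    have hfac : ∀ k : Fin n,
        ((if k = j then (1 + (e (x k):ℂ) * (e true:ℂ))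
            else (1 + (ρ:ℂ) * ((e (x k):ℂ) * (e true:ℂ)))) * (if k ∈ S then sgn true else 1)
          + (if k = j then (1 + (e (x k):ℂ) * (e false:ℂ))
            else (1 + (ρ:ℂ) * ((e (x k):ℂ) * (e false:ℂ)))) * (if k ∈ S then sgn false else 1))
        = 2 * (if k ∈ S then (if k = j then sgn (x k) else (ρ:ℂ) * sgn (x k)) else 1) := by
      intro k
      by_cases hk : k = j <;> by_cases hkS : k ∈ S <;>
        cases hx : (x k) <;> simp [hk, hkS, e, sgn] <;> ring
    rw [Finset.prod_congr rfl fun k _ => hfac k, Finset.prod_mul_distrib, Finset.prod_const,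
      Finset.card_univ, Fintype.card_fin]
    congr 1
    rw [Finset.prod_ite_mem, Finset.univ_inter]
    rw [← Finset.prod_erase_mul _ _ hjS, if_pos rfl]
    have herase : ∀ k ∈ S.erase j, (if k = j then sgn (x k) else (ρ:ℂ) * sgn (x k))
        = (ρ:ℂ) * sgn (x k) := by
      intro k hk
      rw [if_neg (Finset.ne_of_mem_erase hk)]
    rw [Finset.prod_congr rfl herase, Finset.prod_mul_distrib, Finset.prod_const,
      Finset.card_erase_of_mem hjS]
    rw [wS, ← Finset.prod_erase_mul _ _ hjS]
    ring
  calc Sno f ρ j x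
      = ∑ S : Finset (Fin n), (if j ∈ S then cf f S else 0)
          * ((∑ y : Fin n → Bool, (Kj ρ j x y : ℂ) * wS S y) / 2^n) := by
        unfold Sno
        refine Finset.sum_congr rfl fun S _ => ?_
        by_cases hjS : j ∈ S
        · rw [if_pos hjS, if_pos hjS, key S hjS]
          have h2 : (2:ℂ)^n ≠ 0 := pow_ne_zero _ two_ne_zero
          field_simp
        · simp [hjS]
    _ = ∑ S : Finset (Fin n), (∑ y : Fin n → Bool,
          (Kj ρ j x y : ℂ) * ((if j ∈ S then cf f S else 0) * wS S y)) / 2^n := by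
        refine Finset.sum_congr rfl fun S _ => ?_
        rw [← mul_div_assoc]
        congr 1
        rw [Finset.mul_sum]
        exact Finset.sum_congr rfl fun y _ => by ring
    _ = (∑ y : Fin n → Bool, (Kj ρ j x y : ℂ) * Dj j f y) / 2^n := by
        rw [← Finset.sum_div]
        congr 1
        rw [Finset.sum_comm]
        refine Finset.sum_congr rfl fun y _ => ?_
        rw [Dj_expand j f y, Finset.mul_sum]

/-- Cauchy–Schwarz with square roots. -/
lemma sum_mul_le_sqrt {ι : Type*} (s : Finset ι) (a b : ι → ℝ)
    (ha : ∀ i ∈ s, 0 ≤ a i) (hb : ∀ i ∈ s, 0 ≤ b i) :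
    ∑ i ∈ s, a i * b i ≤ Real.sqrt (∑ i ∈ s, a i ^ 2) * Real.sqrt (∑ i ∈ s, b i ^ 2) := by
  have h := Finset.sum_mul_sq_le_sq_mul_sq s a b
  have h0 : 0 ≤ ∑ i ∈ s, a i * b i :=
    Finset.sum_nonneg fun i hi => mul_nonneg (ha i hi) (hb i hi)
  have h1 : 0 ≤ ∑ i ∈ s, a i ^ 2 := Finset.sum_nonneg fun i _ => sq_nonneg _
  calc ∑ i ∈ s, a i * b i = Real.sqrt ((∑ i ∈ s, a i * b i)^2) := (Real.sqrt_sq h0).symm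
    _ ≤ Real.sqrt ((∑ i ∈ s, a i ^ 2) * (∑ i ∈ s, b i ^ 2)) := Real.sqrt_le_sqrt h
    _ = _ := Real.sqrt_mul h1 _

/-- Jensen / Cauchy-Schwarz for the kernel. -/
lemma Sno_sq_le (f : (Fin n → Bool) → ℂ) {ρ : ℝ} (hρ0 : 0 ≤ ρ) (hρ1 : ρ ≤ 1)
    (j : Fin n) (x : Fin n → Bool) :
    ‖Sno f ρ j x‖^2 ≤ (∑ y : Fin n → Bool, Kj ρ j x y * ‖Dj j f y‖^2) / 2^n := by
  have hden : ‖(2:ℂ)^n‖ = (2:ℝ)^n := by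
    rw [norm_pow]
    norm_num
  have hnum : ‖∑ y : Fin n → Bool, (Kj ρ j x y : ℂ) * Dj j f y‖
      ≤ ∑ y : Fin n → Bool, Kj ρ j x y * ‖Dj j f y‖ := by
    refine (norm_sum_le _ _).trans ?_
    refine Finset.sum_le_sum fun y _ => ?_
    rw [norm_mul, Complex.norm_real, Real.norm_eq_abs,
      abs_of_nonneg (Kj_nonneg hρ0 hρ1 j x y)]
  have h1 : ‖Sno f ρ j x‖ ≤ (∑ y : Fin n → Bool, Kj ρ j x y * ‖Dj j f y‖) / 2^n := by
    rw [Sno_kernel, norm_div, hden]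
    exact div_le_div_of_nonneg_right (c := (2:ℝ)^n) hnum (by positivity)
  have h2 : ‖Sno f ρ j x‖^2 ≤ ((∑ y : Fin n → Bool, Kj ρ j x y * ‖Dj j f y‖) / 2^n)^2 :=
    pow_le_pow_left₀ (norm_nonneg _) h1 2
  refine h2.trans ?_
  rw [div_pow]
  have hCS : (∑ y : Fin n → Bool, Kj ρ j x y * ‖Dj j f y‖)^2
      ≤ (2:ℝ)^n * (∑ y : Fin n → Bool, Kj ρ j x y * ‖Dj j f y‖^2) := by
    have hrw : ∀ y : Fin n → Bool, Kj ρ j x y * ‖Dj j f y‖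
        = Real.sqrt (Kj ρ j x y) * (Real.sqrt (Kj ρ j x y) * ‖Dj j f y‖) := by
      intro y
      rw [← mul_assoc, Real.mul_self_sqrt (Kj_nonneg hρ0 hρ1 j x y)]
    rw [Finset.sum_congr rfl fun y _ => hrw y]
    refine (Finset.sum_mul_sq_le_sq_mul_sq _ _ _).trans ?_
    have e1 : ∑ y : Fin n → Bool, (Real.sqrt (Kj ρ j x y))^2 = (2:ℝ)^n := by
      rw [Finset.sum_congr rfl fun y _ => Real.sq_sqrt (Kj_nonneg hρ0 hρ1 j x y)]
      exact_mod_cast Kj_mass ρ j x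
    have e2 : ∀ y : Fin n → Bool, (Real.sqrt (Kj ρ j x y) * ‖Dj j f y‖)^2
        = Kj ρ j x y * ‖Dj j f y‖^2 := by
      intro y
      rw [mul_pow, Real.sq_sqrt (Kj_nonneg hρ0 hρ1 j x y)]
    rw [e1, Finset.sum_congr rfl fun y _ => e2 y]
  calc (∑ y : Fin n → Bool, Kj ρ j x y * ‖Dj j f y‖)^2 / ((2:ℝ)^n)^2
      ≤ ((2:ℝ)^n * (∑ y : Fin n → Bool, Kj ρ j x y * ‖Dj j f y‖^2)) / ((2:ℝ)^n)^2 :=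
        div_le_div_of_nonneg_right (c := ((2:ℝ)^n)^2) hCS (by positivity)
    _ = (∑ y : Fin n → Bool, Kj ρ j x y * ‖Dj j f y‖^2) / 2^n := by
        rw [pow_two]
        field_simp

lemma Kj_split (ρ : ℝ) (j : Fin n) (x y : Fin n → Bool) :
    Kj ρ j x y = Kfull ρ x y + ((1-ρ) * (e (x j) * e (y j))) * Kp ρ j x y := by
  have h1 : Kj ρ j x y = (1 + e (x j) * e (y j)) * Kp ρ j x y := by
    unfold Kj Kp
    rw [← Finset.mul_prod_erase _ _ (Finset.mem_univ j), if_pos rfl]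
    congr 1
    exact Finset.prod_congr rfl fun k hk => by rw [if_neg (Finset.ne_of_mem_erase hk)]
  have h2 : Kfull ρ x y = (1 + ρ * (e (x j) * e (y j))) * Kp ρ j x y := by
    unfold Kfull Kp
    rw [← Finset.mul_prod_erase _ _ (Finset.mem_univ j)]
  rw [h1, h2]
  ring

lemma Kp_flip (ρ : ℝ) (j : Fin n) (x y : Fin n → Bool) :
    Kp ρ j x (DiscreteCube.flip j y) = Kp ρ j x y := by
  unfold Kp
  exact Finset.prod_congr rfl fun k hk => by
    rw [flip_apply_ne j k y (Finset.ne_of_mem_erase hk)]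

lemma sum_odd_flip (j : Fin n) (F : (Fin n → Bool) → ℝ)
    (hodd : ∀ y, F (DiscreteCube.flip j y) = - F y) :
    ∑ y : Fin n → Bool, F y = 0 := by
  have h := sum_flip j F
  have h2 : ∑ y : Fin n → Bool, F (DiscreteCube.flip j y) = - ∑ y : Fin n → Bool, F y := by
    rw [Finset.sum_congr rfl fun y _ => hodd y, Finset.sum_neg_distrib]
  rw [h2] at h
  linarith

/-- merging the pinned kernel with the full kernel on even integrands -/
lemma merge (f : (Fin n → Bool) → ℂ) (ρ : ℝ) (j : Fin n) (x : Fin n → Bool) :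
    ∑ y : Fin n → Bool, Kj ρ j x y * ‖Dj j f y‖^2
      = ∑ y : Fin n → Bool, Kfull ρ x y * ‖Dj j f y‖^2 := by
  have hsplit : ∀ y : Fin n → Bool, Kj ρ j x y * ‖Dj j f y‖^2
      = Kfull ρ x y * ‖Dj j f y‖^2
        + ((1-ρ) * e (x j)) * (e (y j) * Kp ρ j x y * ‖Dj j f y‖^2) := by
    intro y
    rw [Kj_split]
    ring
  rw [Finset.sum_congr rfl fun y _ => hsplit y, Finset.sum_add_distrib, ← Finset.mul_sum]
  have hzero : ∑ y : Fin n → Bool, (e (y j) * Kp ρ j x y * ‖Dj j f y‖^2) = 0 := by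
    refine sum_odd_flip j _ fun y => ?_
    rw [flip_apply_self, e_not, Kp_flip, Dj_flip, norm_neg]
    ring
  rw [hzero, mul_zero, add_zero]

lemma gradLen_nonneg (f : (Fin n → Bool) → ℂ) (y : Fin n → Bool) : 0 ≤ gradLen f y :=
  Real.sqrt_nonneg _

lemma gradLen_le_rLinf (f : (Fin n → Bool) → ℂ) (y : Fin n → Bool) :
    gradLen f y ≤ rLinf (gradLen f) := by
  unfold rLinf
  calc gradLen f y = |gradLen f y| := (abs_of_nonneg (gradLen_nonneg f y)).symm
    _ ≤ ⨆ x, |gradLen f x| :=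
        le_ciSup (f := fun x => |gradLen f x|) (Set.Finite.bddAbove (Set.finite_range _)) y

lemma sum_Dj_sq (f : (Fin n → Bool) → ℂ) (y : Fin n → Bool) :
    ∑ j : Fin n, ‖Dj j f y‖^2 = (gradLen f y)^2 / 4 := by
  have h1 : ∀ j : Fin n, ‖Dj j f y‖^2 = ‖pd j f y‖^2 / 4 := by
    intro j
    rw [Dj_eq_pd, norm_div]
    norm_num
    ring
  rw [Finset.sum_congr rfl fun j _ => h1 j, ← Finset.sum_div]
  congr 1
  rw [gradLen, Real.sq_sqrt]
  positivity

lemma sum_Dj_sq_le (f : (Fin n → Bool) → ℂ) (y : Fin n → Bool) :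
    ∑ j : Fin n, ‖Dj j f y‖^2 ≤ (rLinf (gradLen f))^2 / 4 := by
  rw [sum_Dj_sq]
  have h := gradLen_le_rLinf f y
  have h2 : (gradLen f y)^2 ≤ (rLinf (gradLen f))^2 :=
    pow_le_pow_left₀ (Real.sqrt_nonneg _) h 2
  linarith

/-- A8: the pointwise square-function bound for `Sno`. -/
lemma sum_Sno_sq_le (f : (Fin n → Bool) → ℂ) {ρ : ℝ} (hρ0 : 0 ≤ ρ) (hρ1 : ρ ≤ 1)
    (x : Fin n → Bool) :
    ∑ j : Fin n, ‖Sno f ρ j x‖^2 ≤ (rLinf (gradLen f))^2 / 4 := by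
  set B := (rLinf (gradLen f))^2 / 4 with hB
  calc ∑ j : Fin n, ‖Sno f ρ j x‖^2
      ≤ ∑ j : Fin n, (∑ y : Fin n → Bool, Kj ρ j x y * ‖Dj j f y‖^2) / 2^n :=
        Finset.sum_le_sum fun j _ => Sno_sq_le f hρ0 hρ1 j x
    _ = (∑ y : Fin n → Bool, Kfull ρ x y * ∑ j : Fin n, ‖Dj j f y‖^2) / 2^n := by
        rw [Finset.sum_congr rfl fun j (_ : j ∈ univ) => by rw [merge f ρ j x], ← Finset.sum_div]
        congr 1
        rw [Finset.sum_comm]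
        exact Finset.sum_congr rfl fun y _ => by rw [Finset.mul_sum]
    _ ≤ (∑ y : Fin n → Bool, Kfull ρ x y * B) / 2^n := by
        apply div_le_div_of_nonneg_right ?_ (by positivity)
        refine Finset.sum_le_sum fun y _ => ?_
        exact mul_le_mul_of_nonneg_left (sum_Dj_sq_le f y) (Kfull_nonneg hρ0 hρ1 x y)
    _ = B := by
        rw [← Finset.sum_mul, Kfull_mass]
        field_simp

/-- A9: the gradient bound for `Gf`. -/
lemma sum_Dj_Gf_sq_le (f : (Fin n → Bool) → ℂ) (x : Fin n → Bool) :
    ∑ j : Fin n, ‖Dj j (Gf f) x‖^2 ≤ (rLinf (gradLen f))^2 / 4 := by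
  set B := (rLinf (gradLen f))^2 / 4 with hB
  have hBnn : 0 ≤ B := by positivity
  set u : Fin n → ℂ := fun j => Dj j (Gf f) x with hu
  set W := ∑ j : Fin n, ‖u j‖^2 with hW
  have hWnn : 0 ≤ W := by positivity
  set c : Fin n → Finset (Fin n) → ℝ := fun j S =>
    if j ∈ S then ((starRingEnd ℂ) (u j) * (cf f S * wS S x)).re else 0 with hc
  set φ : ℝ → ℝ := fun ρ => ∑ j : Fin n, ∑ S : Finset (Fin n), c j S * ρ^(S.card - 1) with hφ
  have hφcont : Continuous φ := by
    refine continuous_finset_sum _ fun j _ => continuous_finset_sum _ fun S _ => ?_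
    exact continuous_const.mul (continuous_pow _)
  -- identification of φ with the `Sno` pairing
  have hφ_eq : ∀ ρ : ℝ, φ ρ = ∑ j : Fin n, ((starRingEnd ℂ) (u j) * Sno f ρ j x).re := by
    intro ρ
    refine Finset.sum_congr rfl fun j _ => ?_
    unfold Sno
    rw [Finset.mul_sum, Complex.re_sum]
    refine Finset.sum_congr rfl fun S _ => ?_
    by_cases hjS : j ∈ S
    · rw [hc]
      simp only [hjS, if_true]
      have : (starRingEnd ℂ) (u j) * (cf f S * (ρ:ℂ)^(S.card - 1) * wS S x)
          = ((ρ^(S.card-1) : ℝ) : ℂ) * ((starRingEnd ℂ) (u j) * (cf f S * wS S x)) := by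
        push_cast
        ring
      rw [this, Complex.re_ofReal_mul]
      ring
    · rw [hc]
      simp [hjS]
  -- the value of u j in Fourier form
  have hu_expand : ∀ j : Fin n, u j
      = ∑ S : Finset (Fin n), (if j ∈ S then cf f S / S.card else 0) * wS S x := by
    intro j
    show Dj j (Gf f) x = _
    rw [Dj_Gf_expand]
    refine Finset.sum_congr rfl fun S _ => ?_
    by_cases hjS : j ∈ S
    · have hSne : S ≠ ∅ := by
        intro hS
        rw [hS] at hjS
        exact absurd hjS (Finset.notMem_empty j)
      rw [if_pos hjS, if_pos hjS, gc, if_neg hSne]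
    · rw [if_neg hjS, if_neg hjS]
  -- W as an integral of φ
  have hWint : W = ∫ ρ in (0:ℝ)..1, φ ρ := by
    have hint : ∫ ρ in (0:ℝ)..1, φ ρ = ∑ j : Fin n, ∑ S : Finset (Fin n), c j S / S.card := by
      rw [hφ]
      rw [intervalIntegral.integral_finset_sum (f := fun j ρ => ∑ S : Finset (Fin n), c j S * ρ^(S.card - 1)) (fun j _ => (continuous_finset_sum _
        fun S _ => continuous_const.mul (continuous_pow _)).intervalIntegrable 0 1)]
      refine Finset.sum_congr rfl fun j _ => ?_
      rw [intervalIntegral.integral_finset_sum (f := fun S ρ => c j S * ρ^(S.card - 1)) (fun S _ =>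
        (continuous_const.mul (continuous_pow _)).intervalIntegrable 0 1)]
      refine Finset.sum_congr rfl fun S _ => ?_
      rw [intervalIntegral.integral_const_mul, integral_pow]
      by_cases hjS : j ∈ S
      · have hcard : 1 ≤ S.card := Finset.card_pos.mpr ⟨j, hjS⟩
        have h1 : ((S.card - 1 : ℕ):ℝ) + 1 = (S.card:ℝ) := by
          rw [Nat.cast_sub hcard]
          ring
        rw [one_pow, zero_pow (Nat.succ_ne_zero _), h1]
        ring
      · rw [hc]
        simp [hjS]
    rw [hint, hW]
    refine Finset.sum_congr rfl fun j _ => ?_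
    have h1 : ‖u j‖^2 = ((starRingEnd ℂ) (u j) * u j).re := by
      rw [mul_comm, Complex.mul_conj, Complex.ofReal_re, Complex.normSq_eq_norm_sq]
    rw [h1]
    nth_rewrite 2 [hu_expand j]
    rw [Finset.mul_sum, Complex.re_sum]
    refine Finset.sum_congr rfl fun S _ => ?_
    by_cases hjS : j ∈ S
    · have hSne : (S.card : ℝ) ≠ 0 := by
        have : 0 < S.card := Finset.card_pos.mpr ⟨j, hjS⟩
        positivity
      rw [hc]
      simp only [hjS, if_true]
      have : (starRingEnd ℂ) (u j) * ((cf f S / (S.card:ℂ)) * wS S x)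
          = ((((S.card:ℝ))⁻¹ : ℝ) : ℂ) * ((starRingEnd ℂ) (u j) * (cf f S * wS S x)) := by
        push_cast
        field_simp
      rw [this, Complex.re_ofReal_mul, div_eq_mul_inv]
      ring
    · rw [hc]
      simp [hjS]
  -- pointwise bound for φ
  have hφ_le : ∀ ρ ∈ Set.Icc (0:ℝ) 1, φ ρ ≤ Real.sqrt W * Real.sqrt B := by
    rintro ρ ⟨hρ0, hρ1⟩
    rw [hφ_eq ρ]
    have h1 : ∀ j : Fin n, ((starRingEnd ℂ) (u j) * Sno f ρ j x).re
        ≤ ‖u j‖ * ‖Sno f ρ j x‖ := by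
      intro j
      calc ((starRingEnd ℂ) (u j) * Sno f ρ j x).re
          ≤ ‖(starRingEnd ℂ) (u j) * Sno f ρ j x‖ := Complex.re_le_norm _
        _ = ‖u j‖ * ‖Sno f ρ j x‖ := by
            rw [norm_mul, Complex.norm_conj]
    refine (Finset.sum_le_sum fun j _ => h1 j).trans ?_
    refine (sum_mul_le_sqrt univ _ _ (fun j _ => norm_nonneg _) (fun j _ => norm_nonneg _)).trans ?_
    have h2 : Real.sqrt (∑ j : Fin n, ‖Sno f ρ j x‖^2) ≤ Real.sqrt B :=
      Real.sqrt_le_sqrt (sum_Sno_sq_le f hρ0 hρ1 x)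
    exact mul_le_mul_of_nonneg_left h2 (Real.sqrt_nonneg _)
  -- conclude
  have hWle : W ≤ Real.sqrt W * Real.sqrt B := by
    calc W = ∫ ρ in (0:ℝ)..1, φ ρ := hWint
      _ ≤ ∫ _ρ in (0:ℝ)..1, (Real.sqrt W * Real.sqrt B) := by
          refine intervalIntegral.integral_mono_on (by norm_num)
            (hφcont.intervalIntegrable 0 1)
            (intervalIntegrable_const) hφ_le
      _ = Real.sqrt W * Real.sqrt B := by
          rw [intervalIntegral.integral_const]
          norm_num
  by_cases hW0 : Real.sqrt W = 0
  · have : W = 0 := by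
      have := Real.mul_self_sqrt hWnn
      rw [hW0] at this
      linarith
    rw [← hW, this] at *
    exact hBnn
  · have hWpos : 0 < Real.sqrt W := lt_of_le_of_ne (Real.sqrt_nonneg _) (Ne.symm hW0)
    have h3 : Real.sqrt W * Real.sqrt W ≤ Real.sqrt W * Real.sqrt B := by
      rw [Real.mul_self_sqrt hWnn]
      exact hWle
    have h4 : Real.sqrt W ≤ Real.sqrt B := le_of_mul_le_mul_left h3 hWpos
    calc W = Real.sqrt W * Real.sqrt W := (Real.mul_self_sqrt hWnn).symm
      _ ≤ Real.sqrt B * Real.sqrt B :=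
          mul_le_mul h4 h4 (Real.sqrt_nonneg _) (Real.sqrt_nonneg _)
      _ = B := Real.mul_self_sqrt hBnn

/-! ### moment recursion -/

lemma geom_norm_bound (a b : ℂ) (m : ℕ) (M : ℝ) (ha : ‖a‖ ≤ M) (hb : ‖b‖ ≤ M) :
    ‖a^m - b^m‖ ≤ m * M^(m-1) * ‖a - b‖ := by
  have hM : 0 ≤ M := le_trans (norm_nonneg a) ha
  rw [← geom_sum₂_mul a b m, norm_mul]
  have hsum : ‖∑ i ∈ Finset.range m, a^i * b^(m-1-i)‖ ≤ m * M^(m-1) := by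
    refine (norm_sum_le _ _).trans ?_
    have hterm : ∀ i ∈ Finset.range m, ‖a^i * b^(m-1-i)‖ ≤ M^(m-1) := by
      intro i hi
      rw [norm_mul, norm_pow, norm_pow]
      calc ‖a‖^i * ‖b‖^(m-1-i) ≤ M^i * M^(m-1-i) := by
            exact mul_le_mul (pow_le_pow_left₀ (norm_nonneg _) ha i)
              (pow_le_pow_left₀ (norm_nonneg _) hb _) (by positivity) (by positivity)
        _ = M^(m-1) := by
            rw [← pow_add]
            congr 1
            rw [Finset.mem_range] at hi
            omega
    refine (Finset.sum_le_sum hterm).trans ?_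
    rw [Finset.sum_const, Finset.card_range, nsmul_eq_mul]
  exact mul_le_mul_of_nonneg_right hsum (norm_nonneg _)

lemma norm_conj (z : ℂ) : ‖(starRingEnd ℂ) z‖ = ‖z‖ := Complex.norm_conj z

lemma pow_lip (q : ℕ) (a b : ℂ) :
    ‖a^(q+1) * ((starRingEnd ℂ) a)^q - b^(q+1) * ((starRingEnd ℂ) b)^q‖
      ≤ (2*q+1) * (max ‖a‖ ‖b‖)^(2*q) * ‖a - b‖ := by
  set M := max ‖a‖ ‖b‖ with hM
  have hMa : ‖a‖ ≤ M := le_max_left _ _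
  have hMb : ‖b‖ ≤ M := le_max_right _ _
  have hM0 : 0 ≤ M := le_trans (norm_nonneg a) hMa
  have hsplit : a^(q+1) * ((starRingEnd ℂ) a)^q - b^(q+1) * ((starRingEnd ℂ) b)^q
      = (a^(q+1) - b^(q+1)) * ((starRingEnd ℂ) a)^q
        + b^(q+1) * (((starRingEnd ℂ) a)^q - ((starRingEnd ℂ) b)^q) := by
    ring
  rw [hsplit]
  refine (norm_add_le _ _).trans ?_
  have h1 : ‖(a^(q+1) - b^(q+1)) * ((starRingEnd ℂ) a)^q‖ ≤ ((q:ℝ)+1) * M^(2*q) * ‖a - b‖ := by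
    rw [norm_mul, norm_pow, norm_conj]
    have hg : ‖a^(q+1) - b^(q+1)‖ ≤ (q+1) * M^q * ‖a - b‖ := by
      have := geom_norm_bound a b (q+1) M hMa hMb
      simpa using this
    calc ‖a^(q+1) - b^(q+1)‖ * ‖a‖^q ≤ ((q+1) * M^q * ‖a - b‖) * M^q := by
          exact mul_le_mul hg (pow_le_pow_left₀ (norm_nonneg _) hMa q) (by positivity)
            (by positivity)
      _ = ((q:ℝ)+1) * M^(2*q) * ‖a - b‖ := by
          rw [two_mul, pow_add]
          ring
  have h2 : ‖b^(q+1) * (((starRingEnd ℂ) a)^q - ((starRingEnd ℂ) b)^q)‖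
      ≤ (q:ℝ) * M^(2*q) * ‖a - b‖ := by
    rcases Nat.eq_zero_or_pos q with rfl | hq
    · simp
    · rw [norm_mul, norm_pow]
      have hg : ‖((starRingEnd ℂ) a)^q - ((starRingEnd ℂ) b)^q‖ ≤ q * M^(q-1) * ‖a - b‖ := by
        have h := geom_norm_bound ((starRingEnd ℂ) a) ((starRingEnd ℂ) b) q M
          (by rw [norm_conj]; exact hMa) (by rw [norm_conj]; exact hMb)
        have hab : ‖(starRingEnd ℂ) a - (starRingEnd ℂ) b‖ = ‖a - b‖ := by
          rw [← map_sub, norm_conj]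
        rwa [hab] at h
      calc ‖b‖^(q+1) * ‖((starRingEnd ℂ) a)^q - ((starRingEnd ℂ) b)^q‖
          ≤ M^(q+1) * ((q:ℝ) * M^(q-1) * ‖a - b‖) := by
            exact mul_le_mul (pow_le_pow_left₀ (norm_nonneg _) hMb _) hg (by positivity)
              (by positivity)
        _ = (q:ℝ) * (M^(q+1) * M^(q-1)) * ‖a - b‖ := by ring
        _ = (q:ℝ) * M^(2*q) * ‖a - b‖ := by
            have hq2 : q+1+(q-1) = 2*q := by omega
            rw [← pow_add, hq2]
  calc ‖(a^(q+1) - b^(q+1)) * ((starRingEnd ℂ) a)^q‖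
        + ‖b^(q+1) * (((starRingEnd ℂ) a)^q - ((starRingEnd ℂ) b)^q)‖
      ≤ ((q:ℝ)+1) * M^(2*q) * ‖a - b‖ + (q:ℝ) * M^(2*q) * ‖a - b‖ := add_le_add h1 h2
    _ = (2*q+1) * M^(2*q) * ‖a - b‖ := by
        push_cast
        ring

lemma max_pow_le (p r : ℝ) (hp : 0 ≤ p) (hr : 0 ≤ r) (m : ℕ) :
    (max p r)^m ≤ p^m + r^m := by
  rcases le_total p r with h | h
  · rw [max_eq_right h]
    exact le_add_of_nonneg_left (by positivity)
  · rw [max_eq_left h]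
    exact le_add_of_nonneg_right (by positivity)

lemma Dj_sub_const (j : Fin n) (f : (Fin n → Bool) → ℂ) (c : ℂ) :
    Dj j (fun y => f y - c) = Dj j f := by
  funext x
  unfold Dj
  ring

lemma abs_Ex_le (u : (Fin n → Bool) → ℂ) :
    ‖Ex u‖ ≤ (∑ x : Fin n → Bool, ‖u x‖) / 2^n := by
  unfold Ex
  rw [norm_div, norm_pow, Complex.norm_ofNat]
  exact div_le_div_of_nonneg_right (norm_sum_le _ _) (by positivity)

lemma Ex_ofReal (r : (Fin n → Bool) → ℝ) :
    Ex (fun x => ((r x : ℝ) : ℂ)) = (((∑ x : Fin n → Bool, r x) / 2^n : ℝ) : ℂ) := by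
  unfold Ex
  push_cast
  ring

/-- the basic moment recursion -/
lemma moment_rec (f : (Fin n → Bool) → ℂ) (q : ℕ) :
    (∑ x : Fin n → Bool, ‖f x - DiscreteCube.expect f‖^(2*q+2)) / 2^n
      ≤ (2*(2*(q:ℝ)+1) * ((rLinf (gradLen f))^2/4))
        * ((∑ x : Fin n → Bool, ‖f x - DiscreteCube.expect f‖^(2*q)) / 2^n) := by
  set B := (rLinf (gradLen f))^2/4 with hB
  have hBnn : 0 ≤ B := by positivity
  set g : (Fin n → Bool) → ℂ := fun x => f x - DiscreteCube.expect f with hg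
  set h : (Fin n → Bool) → ℂ := fun y => (g y)^(q+1) * ((starRingEnd ℂ) (g y))^q with hh
  -- identify the left side as `Ex (g * conj h)`
  have hgh : ∀ x, g x * (starRingEnd ℂ) (h x) = ((‖g x‖^(2*q+2) : ℝ) : ℂ) := by
    intro x
    rw [hh]
    simp only [map_mul, map_pow, Complex.conj_conj]
    have : g x * (((starRingEnd ℂ) (g x))^(q+1) * (g x)^q)
        = (g x * (starRingEnd ℂ) (g x))^(q+1) := by
      rw [mul_pow]
      ring
    rw [this, Complex.mul_conj, ← Complex.ofReal_pow]
    congr 1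
    rw [Complex.normSq_eq_norm_sq, ← pow_mul]
    ring
  have hlhs : Ex (fun x => g x * (starRingEnd ℂ) (h x))
      = (((∑ x : Fin n → Bool, ‖g x‖^(2*q+2)) / 2^n : ℝ) : ℂ) := by
    rw [show (fun x => g x * (starRingEnd ℂ) (h x))
        = fun x => ((‖g x‖^(2*q+2) : ℝ) : ℂ) from funext hgh]
    exact Ex_ofReal _
  -- IBP
  have hibp := IBP f h
  -- the right side bound
  have hDjh : ∀ (j : Fin n) (x : Fin n → Bool),
      ‖Dj j h x‖ ≤ (2*(q:ℝ)+1) * (‖g x‖^(2*q) + ‖g (DiscreteCube.flip j x)‖^(2*q))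
        * ‖Dj j f x‖ := by
    intro j x
    have hDjg : Dj j g = Dj j f := Dj_sub_const j f _
    have h1 : Dj j h x = (h x - h (DiscreteCube.flip j x))/2 := rfl
    have h2 : ‖Dj j h x‖ = ‖h x - h (DiscreteCube.flip j x)‖/2 := by
      rw [h1, norm_div]
      norm_num
    rw [h2]
    have h3 := pow_lip q (g x) (g (DiscreteCube.flip j x))
    have h4 : (max ‖g x‖ ‖g (DiscreteCube.flip j x)‖)^(2*q)
        ≤ ‖g x‖^(2*q) + ‖g (DiscreteCube.flip j x)‖^(2*q) :=
      max_pow_le _ _ (norm_nonneg _) (norm_nonneg _) _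
    have h5 : ‖g x - g (DiscreteCube.flip j x)‖ = 2 * ‖Dj j f x‖ := by
      rw [← hDjg]
      unfold Dj
      rw [norm_div]
      norm_num
      ring
    calc ‖h x - h (DiscreteCube.flip j x)‖/2
        ≤ ((2*q+1) * (max ‖g x‖ ‖g (DiscreteCube.flip j x)‖)^(2*q)
            * ‖g x - g (DiscreteCube.flip j x)‖)/2 := by
          exact div_le_div_of_nonneg_right h3 (by norm_num)
      _ = (2*(q:ℝ)+1) * (max ‖g x‖ ‖g (DiscreteCube.flip j x)‖)^(2*q) * ‖Dj j f x‖ := by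
          rw [h5]
          push_cast
          ring
      _ ≤ (2*(q:ℝ)+1) * (‖g x‖^(2*q) + ‖g (DiscreteCube.flip j x)‖^(2*q)) * ‖Dj j f x‖ := by
          have : (0:ℝ) ≤ 2*(q:ℝ)+1 := by positivity
          exact mul_le_mul_of_nonneg_right (mul_le_mul_of_nonneg_left h4 this) (norm_nonneg _)
  -- pointwise Cauchy-Schwarz bound
  have hCS : ∀ x : Fin n → Bool, ∑ j : Fin n, ‖Dj j (Gf f) x‖ * ‖Dj j f x‖ ≤ B := by
    intro x
    refine (sum_mul_le_sqrt univ _ _ (fun j _ => norm_nonneg _) (fun j _ => norm_nonneg _)).trans ?_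
    have e1 : Real.sqrt (∑ j : Fin n, ‖Dj j (Gf f) x‖^2) ≤ Real.sqrt B :=
      Real.sqrt_le_sqrt (sum_Dj_Gf_sq_le f x)
    have e2 : Real.sqrt (∑ j : Fin n, ‖Dj j f x‖^2) ≤ Real.sqrt B :=
      Real.sqrt_le_sqrt (sum_Dj_sq_le f x)
    calc Real.sqrt (∑ j : Fin n, ‖Dj j (Gf f) x‖^2) * Real.sqrt (∑ j : Fin n, ‖Dj j f x‖^2)
        ≤ Real.sqrt B * Real.sqrt B :=
          mul_le_mul e1 e2 (Real.sqrt_nonneg _) (Real.sqrt_nonneg _)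
      _ = B := Real.mul_self_sqrt hBnn
  -- assemble
  have hmain : (∑ x : Fin n → Bool, ‖g x‖^(2*q+2)) / 2^n
      ≤ ∑ j : Fin n, (∑ x : Fin n → Bool, ‖Dj j (Gf f) x‖ * ‖Dj j h x‖) / 2^n := by
    have habs : (∑ x : Fin n → Bool, ‖g x‖^(2*q+2)) / 2^n
        = ‖Ex (fun x => g x * (starRingEnd ℂ) (h x))‖ := by
      rw [hlhs, Complex.norm_real, Real.norm_eq_abs, abs_of_nonneg (by positivity)]
    rw [habs, hibp]
    refine (norm_sum_le _ _).trans ?_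
    refine Finset.sum_le_sum fun j _ => ?_
    refine (abs_Ex_le _).trans ?_
    refine div_le_div_of_nonneg_right ?_ (by positivity)
    refine Finset.sum_le_sum fun x _ => ?_
    rw [norm_mul, norm_conj]
  have hflip : ∀ j : Fin n,
      ∑ x : Fin n → Bool, ‖Dj j (Gf f) x‖ * ‖Dj j f x‖ * ‖g (DiscreteCube.flip j x)‖^(2*q)
        = ∑ x : Fin n → Bool, ‖Dj j (Gf f) x‖ * ‖Dj j f x‖ * ‖g x‖^(2*q) := by
    intro j
    have hT := sum_flip j
      (fun x => ‖Dj j (Gf f) x‖ * ‖Dj j f x‖ * ‖g (DiscreteCube.flip j x)‖^(2*q))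
    calc ∑ x : Fin n → Bool, ‖Dj j (Gf f) x‖ * ‖Dj j f x‖ * ‖g (DiscreteCube.flip j x)‖^(2*q)
        = ∑ x : Fin n → Bool, ‖Dj j (Gf f) (DiscreteCube.flip j x)‖
            * ‖Dj j f (DiscreteCube.flip j x)‖
            * ‖g (DiscreteCube.flip j (DiscreteCube.flip j x))‖^(2*q) := hT.symm
      _ = ∑ x : Fin n → Bool, ‖Dj j (Gf f) x‖ * ‖Dj j f x‖ * ‖g x‖^(2*q) := by
          refine Finset.sum_congr rfl fun x _ => ?_
          rw [Dj_flip, Dj_flip, norm_neg, norm_neg, flip_involutive j x]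
  have hstep : ∀ j : Fin n, ∑ x : Fin n → Bool, ‖Dj j (Gf f) x‖ * ‖Dj j h x‖
      ≤ (2*(2*(q:ℝ)+1)) * ∑ x : Fin n → Bool,
          ‖Dj j (Gf f) x‖ * ‖Dj j f x‖ * ‖g x‖^(2*q) := by
    intro j
    calc ∑ x : Fin n → Bool, ‖Dj j (Gf f) x‖ * ‖Dj j h x‖
        ≤ ∑ x : Fin n → Bool, ‖Dj j (Gf f) x‖
            * ((2*(q:ℝ)+1) * (‖g x‖^(2*q) + ‖g (DiscreteCube.flip j x)‖^(2*q)) * ‖Dj j f x‖) := by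
          refine Finset.sum_le_sum fun x _ => ?_
          exact mul_le_mul_of_nonneg_left (hDjh j x) (norm_nonneg _)
      _ = (2*(q:ℝ)+1) * ((∑ x : Fin n → Bool, ‖Dj j (Gf f) x‖ * ‖Dj j f x‖ * ‖g x‖^(2*q))
            + ∑ x : Fin n → Bool,
                ‖Dj j (Gf f) x‖ * ‖Dj j f x‖ * ‖g (DiscreteCube.flip j x)‖^(2*q)) := by
          rw [← Finset.sum_add_distrib, Finset.mul_sum]
          refine Finset.sum_congr rfl fun x _ => ?_
          ring
      _ = (2*(2*(q:ℝ)+1)) * ∑ x : Fin n → Bool,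
            ‖Dj j (Gf f) x‖ * ‖Dj j f x‖ * ‖g x‖^(2*q) := by
          rw [hflip j]
          ring
  calc (∑ x : Fin n → Bool, ‖g x‖^(2*q+2)) / 2^n
      ≤ ∑ j : Fin n, (∑ x : Fin n → Bool, ‖Dj j (Gf f) x‖ * ‖Dj j h x‖) / 2^n := hmain
    _ ≤ ∑ j : Fin n, ((2*(2*(q:ℝ)+1)) * ∑ x : Fin n → Bool,
          ‖Dj j (Gf f) x‖ * ‖Dj j f x‖ * ‖g x‖^(2*q)) / 2^n := by
        refine Finset.sum_le_sum fun j _ => ?_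
        exact div_le_div_of_nonneg_right (hstep j) (by positivity)
    _ = (2*(2*(q:ℝ)+1)) * ((∑ x : Fin n → Bool,
          (∑ j : Fin n, ‖Dj j (Gf f) x‖ * ‖Dj j f x‖) * ‖g x‖^(2*q)) / 2^n) := by
        rw [← Finset.sum_div, ← Finset.mul_sum, Finset.sum_comm]
        rw [mul_div_assoc]
        congr 2
        refine Finset.sum_congr rfl fun x _ => ?_
        rw [Finset.sum_mul]
    _ ≤ (2*(2*(q:ℝ)+1)) * ((∑ x : Fin n → Bool, B * ‖g x‖^(2*q)) / 2^n) := by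
        refine mul_le_mul_of_nonneg_left ?_ (by positivity)
        refine div_le_div_of_nonneg_right ?_ (by positivity)
        refine Finset.sum_le_sum fun x _ => ?_
        exact mul_le_mul_of_nonneg_right (hCS x) (by positivity)
    _ = (2*(2*(q:ℝ)+1) * B) * ((∑ x : Fin n → Bool, ‖g x‖^(2*q)) / 2^n) := by
        rw [← Finset.mul_sum]
        ring

/-- the moment bound by induction -/
lemma moment_bound (f : (Fin n → Bool) → ℂ) (k : ℕ) :
    (∑ x : Fin n → Bool, ‖f x - DiscreteCube.expect f‖^(2*k)) / 2^n
      ≤ ((2*k).factorial : ℝ) / (k.factorial : ℝ) * ((rLinf (gradLen f))^2/4)^k := by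
  set B := (rLinf (gradLen f))^2/4 with hB
  have hBnn : 0 ≤ B := by positivity
  induction k with
  | zero =>
      simp only [Nat.mul_zero, pow_zero, Nat.factorial_zero]
      rw [Finset.sum_const, Finset.card_univ, Fintype.card_fun, Fintype.card_bool,
        Fintype.card_fin, nsmul_eq_mul]
      norm_num
  | succ k ih =>
      have hrec := moment_rec f k
      have h2 : 2*(k+1) = 2*k+2 := by ring
      rw [h2]
      have hfac : ((2*(k+1)).factorial : ℝ) / ((k+1).factorial : ℝ)
          = (2*(2*(k:ℝ)+1)) * (((2*k).factorial : ℝ) / (k.factorial : ℝ)) := by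
        have e1 : 2*(k+1) = (2*k+1)+1 := by ring
        rw [e1, Nat.factorial_succ, Nat.factorial_succ, Nat.factorial_succ]
        have hk0 : ((k.factorial : ℝ)) ≠ 0 := by positivity
        have hk1 : ((k:ℝ)+1) ≠ 0 := by positivity
        push_cast
        field_simp
        ring
      calc (∑ x : Fin n → Bool, ‖f x - DiscreteCube.expect f‖^(2*k+2)) / 2^n
          ≤ (2*(2*(k:ℝ)+1) * B) * ((∑ x : Fin n → Bool,
              ‖f x - DiscreteCube.expect f‖^(2*k)) / 2^n) := hrec
        _ ≤ (2*(2*(k:ℝ)+1) * B) * (((2*k).factorial : ℝ) / (k.factorial : ℝ) * B^k) := by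
            refine mul_le_mul_of_nonneg_left ih (by positivity)
        _ = ((2*(k+1)).factorial : ℝ) / ((k+1).factorial : ℝ) * B^(k+1) := by
            rw [hfac]
            ring

/-! ### the exponential moment bound and the final concentration -/

lemma exp_tsum (y : ℝ) : Real.exp y = ∑' m : ℕ, y^m / (m.factorial : ℝ) := by
  rw [Real.exp_eq_exp_ℝ, NormedSpace.exp_eq_tsum ℝ]
  refine tsum_congr fun m => ?_
  rw [smul_eq_mul, inv_mul_eq_div]

lemma summable_even (y : ℝ) : Summable (fun k : ℕ => y^(2*k) / ((2*k).factorial : ℝ)) := by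
  have hinj : Function.Injective (fun k : ℕ => 2*k) := by
    intro a b hab
    simp only at hab
    omega
  have h := (Real.summable_pow_div_factorial y).comp_injective hinj
  exact h

/-- The exponential moment bound. -/
lemma cosh_moment (f : (Fin n → Bool) → ℂ) (lam : ℝ) (hlam : 0 ≤ lam) :
    ∑ x : Fin n → Bool, Real.cosh (lam * ‖f x - DiscreteCube.expect f‖)
      ≤ 2^n * Real.exp (lam^2 * ((rLinf (gradLen f))^2/4)) := by
  set B := (rLinf (gradLen f))^2/4 with hB
  have hBnn : 0 ≤ B := by positivity
  set g : (Fin n → Bool) → ℂ := fun x => f x - DiscreteCube.expect f with hg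
  have hser : ∀ x : Fin n → Bool, Real.cosh (lam * ‖g x‖)
      = ∑' k : ℕ, (lam * ‖g x‖)^(2*k) / ((2*k).factorial : ℝ) := fun x => Real.cosh_eq_tsum _
  rw [Finset.sum_congr rfl fun x _ => hser x]
  rw [← Summable.tsum_finsetSum (fun x _ => summable_even (lam * ‖g x‖))]
  have hterm : ∀ k : ℕ, ∑ x : Fin n → Bool, (lam * ‖g x‖)^(2*k) / ((2*k).factorial : ℝ)
      ≤ 2^n * ((lam^2*B)^k / (k.factorial : ℝ)) := by
    intro k
    have h1 : ∑ x : Fin n → Bool, (lam * ‖g x‖)^(2*k) / ((2*k).factorial : ℝ)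
        = lam^(2*k) / ((2*k).factorial : ℝ) * ∑ x : Fin n → Bool, ‖g x‖^(2*k) := by
      rw [Finset.mul_sum]
      refine Finset.sum_congr rfl fun x _ => ?_
      rw [mul_pow]
      ring
    rw [h1]
    have h2 : ∑ x : Fin n → Bool, ‖g x‖^(2*k)
        ≤ 2^n * (((2*k).factorial : ℝ) / (k.factorial : ℝ) * B^k) := by
      have := moment_bound f k
      rw [div_le_iff₀ (by positivity : (0:ℝ) < 2^n)] at this
      calc ∑ x : Fin n → Bool, ‖g x‖^(2*k)
          ≤ ((2*k).factorial : ℝ) / (k.factorial : ℝ) * B^k * 2^n := this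
        _ = 2^n * (((2*k).factorial : ℝ) / (k.factorial : ℝ) * B^k) := by ring
    calc lam^(2*k) / ((2*k).factorial : ℝ) * ∑ x : Fin n → Bool, ‖g x‖^(2*k)
        ≤ lam^(2*k) / ((2*k).factorial : ℝ)
            * (2^n * (((2*k).factorial : ℝ) / (k.factorial : ℝ) * B^k)) := by
          exact mul_le_mul_of_nonneg_left h2 (by positivity)
      _ = 2^n * ((lam^2*B)^k / (k.factorial : ℝ)) := by
          have hfacne : ((2*k).factorial : ℝ) ≠ 0 := by positivity
          rw [mul_pow, pow_mul]
          field_simp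
  have hsum2 : Summable (fun k : ℕ => 2^n * ((lam^2*B)^k / (k.factorial : ℝ))) :=
    Summable.mul_left ((2:ℝ)^n) (Real.summable_pow_div_factorial (lam^2*B))
  have hsum1 : Summable (fun k : ℕ =>
      ∑ x : Fin n → Bool, (lam * ‖g x‖)^(2*k) / ((2*k).factorial : ℝ)) := by
    exact summable_sum fun x _ => summable_even (lam * ‖g x‖)
  calc ∑' k : ℕ, ∑ x : Fin n → Bool, (lam * ‖g x‖)^(2*k) / ((2*k).factorial : ℝ)
      ≤ ∑' k : ℕ, 2^n * ((lam^2*B)^k / (k.factorial : ℝ)) :=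
        Summable.tsum_le_tsum hterm hsum1 hsum2
    _ = 2^n * Real.exp (lam^2*B) := by
        rw [tsum_mul_left, exp_tsum]

/-- nonconstant functions have a nonzero partial derivative somewhere -/
lemma exists_flip_ne (f : (Fin n → Bool) → ℂ) (hf : ∃ x y, f x ≠ f y) :
    ∃ x j, f x ≠ f (DiscreteCube.flip j x) := by
  by_contra hcon
  push_neg at hcon
  obtain ⟨x, y, hxy⟩ := hf
  apply hxy
  have key : ∀ m : ℕ, ∀ x y : Fin n → Bool,
      (univ.filter (fun j => x j ≠ y j)).card = m → f x = f y := by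
    intro m
    induction m with
    | zero =>
        intro x y hm
        have hxy2 : x = y := by
          funext j
          by_contra hj
          have hmem : j ∈ univ.filter (fun j => x j ≠ y j) := by
            simp [hj]
          rw [Finset.card_eq_zero] at hm
          rw [hm] at hmem
          exact absurd hmem (Finset.notMem_empty j)
        rw [hxy2]
    | succ m ih =>
        intro x y hm
        have hne : (univ.filter (fun j => x j ≠ y j)).Nonempty := by
          rw [← Finset.card_pos, hm]
          omega
        obtain ⟨j, hj⟩ := hne
        have hxj : x j ≠ y j := by
          simpa using hj
        have h1 : f x = f (DiscreteCube.flip j x) := hcon x j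
        have h2 : f (DiscreteCube.flip j x) = f y := by
          apply ih
          have hset : (univ.filter (fun k => DiscreteCube.flip j x k ≠ y k))
              = (univ.filter (fun k => x k ≠ y k)).erase j := by
            ext k
            simp only [Finset.mem_filter, Finset.mem_erase, Finset.mem_univ, true_and]
            rcases eq_or_ne k j with rfl | hkj
            · rw [flip_apply_self]
              cases hxb : x k <;> cases hyb : y k <;> simp_all
            · rw [flip_apply_ne j k x hkj]
              simp [hkj]
          rw [hset, Finset.card_erase_of_mem hj, hm]
          omega
        exact h1.trans h2
  exact key _ x y rfl

lemma rLinf_pos (f : (Fin n → Bool) → ℂ) (hf : ∃ x y, f x ≠ f y) :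
    0 < rLinf (gradLen f) := by
  obtain ⟨x0, j0, hx0⟩ := exists_flip_ne f hf
  have hpd : 0 < ‖pd j0 f x0‖ :=
    norm_pos_iff.mpr (sub_ne_zero.mpr hx0)
  have hgrad : 0 < gradLen f x0 := by
    rw [gradLen]
    apply Real.sqrt_pos.mpr
    have h1 : ‖pd j0 f x0‖^2 ≤ ∑ j : Fin n, ‖pd j f x0‖^2 :=
      Finset.single_le_sum (f := fun j => ‖pd j f x0‖^2)
        (fun j _ => sq_nonneg _) (Finset.mem_univ j0)
    nlinarith
  exact lt_of_lt_of_le hgrad (gradLen_le_rLinf f x0)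

end CubeProof

open CubeProof

/-- **Concentration on the discrete cube.** For every `n ≥ 1`, every nonconstant
`f : Ω_n → ℂ` and every `t > 0`,
`ℙ{|f − 𝔼f| > t} ≤ 2 exp(−8t²/(π²‖|∇f|‖_∞²))`. -/
theorem cube_concentration (n : ℕ) (hn : 1 ≤ n) (f : (Fin n → Bool) → ℂ)
    (hf : ∃ x y, f x ≠ f y) (t : ℝ) (ht : 0 < t) :
    ((Finset.univ.filter
        (fun x : Fin n → Bool => t < ‖f x - expect f‖)).card : ℝ) / 2 ^ n ≤
      2 * Real.exp (-(8 * t ^ 2) / (π ^ 2 * rLinf (gradLen f) ^ 2)) := by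
  classical
  set L := rLinf (gradLen f) with hL
  have hLpos : 0 < L := rLinf_pos f hf
  set B := L^2/4 with hB
  set lam := 2*t/L^2 with hlam
  have hlamnn : 0 ≤ lam := by positivity
  set g : (Fin n → Bool) → ℂ := fun x => f x - DiscreteCube.expect f with hg
  set A := (Finset.univ.filter
      (fun x : Fin n → Bool => t < ‖f x - DiscreteCube.expect f‖)) with hA
  -- Markov
  have hmarkov : (A.card : ℝ) * Real.cosh (lam * t)
      ≤ ∑ x : Fin n → Bool, Real.cosh (lam * ‖g x‖) := by
    calc (A.card : ℝ) * Real.cosh (lam * t)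
        = ∑ _x ∈ A, Real.cosh (lam * t) := by
          rw [Finset.sum_const, nsmul_eq_mul]
      _ ≤ ∑ x ∈ A, Real.cosh (lam * ‖g x‖) := by
          refine Finset.sum_le_sum fun x hx => ?_
          rw [hA, Finset.mem_filter] at hx
          have hx2 : t < ‖g x‖ := by
            rw [hg]
            exact hx.2
          rw [Real.cosh_le_cosh]
          rw [abs_of_nonneg (by positivity), abs_of_nonneg (by positivity)]
          exact mul_le_mul_of_nonneg_left (le_of_lt hx2) hlamnn
      _ ≤ ∑ x : Fin n → Bool, Real.cosh (lam * ‖g x‖) := by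
          refine Finset.sum_le_sum_of_subset_of_nonneg (Finset.subset_univ A) ?_
          intro x _ _
          exact le_of_lt (Real.cosh_pos _)
  have hmoment := cosh_moment f lam hlamnn
  have hchain : (A.card : ℝ) * Real.cosh (lam * t) ≤ 2^n * Real.exp (lam^2 * B) :=
    le_trans hmarkov hmoment
  -- cosh lower bound
  have hcosh_lb : Real.exp (lam * t) / 2 ≤ Real.cosh (lam * t) := by
    rw [Real.cosh_eq]
    have := Real.exp_pos (-(lam * t))
    linarith
  have hcoshpos : (0:ℝ) < Real.cosh (lam * t) := Real.cosh_pos _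
  -- combine
  have hkey : (A.card : ℝ) ≤ 2^n * (2 * Real.exp (lam^2*B - lam*t)) := by
    have e1 : (A.card : ℝ) ≤ 2^n * Real.exp (lam^2 * B) / Real.cosh (lam * t) := by
      rw [le_div_iff₀ hcoshpos]
      exact hchain
    refine e1.trans ?_
    rw [div_le_iff₀ hcoshpos]
    have e2 : Real.exp (lam^2*B) ≤ 2 * Real.exp (lam^2*B - lam*t) * Real.cosh (lam*t) := by
      have e3 : 2 * Real.exp (lam^2*B - lam*t) * (Real.exp (lam*t)/2) = Real.exp (lam^2*B) := by
        rw [Real.exp_sub]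
        field_simp [Real.exp_ne_zero]
      calc Real.exp (lam^2*B) = 2 * Real.exp (lam^2*B - lam*t) * (Real.exp (lam*t)/2) := e3.symm
        _ ≤ 2 * Real.exp (lam^2*B - lam*t) * Real.cosh (lam*t) :=
            mul_le_mul_of_nonneg_left hcosh_lb (by positivity)
    calc (2:ℝ)^n * Real.exp (lam^2*B)
        ≤ 2^n * (2 * Real.exp (lam^2*B - lam*t) * Real.cosh (lam*t)) :=
          mul_le_mul_of_nonneg_left e2 (by positivity)
      _ = 2^n * (2 * Real.exp (lam^2*B - lam*t)) * Real.cosh (lam*t) := by ring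
  -- arithmetic of the exponent
  have harg : lam^2*B - lam*t = -(t^2)/L^2 := by
    rw [hlam, hB]
    have hLne : L ≠ 0 := ne_of_gt hLpos
    field_simp
    ring
  have hexp_mono : Real.exp (-(t^2)/L^2) ≤ Real.exp (-(8*t^2) / (π^2 * L^2)) := by
    rw [Real.exp_le_exp]
    have hpi : (3:ℝ) < π := Real.pi_gt_three
    have h8 : (8:ℝ) ≤ π^2 := by nlinarith
    rw [div_le_div_iff₀ (by positivity) (by positivity), neg_mul, neg_mul, neg_le_neg_iff]
    nlinarith [sq_nonneg (t*L), sq_nonneg t, sq_nonneg L, hLpos, ht]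
  -- final
  rw [div_le_iff₀ (by positivity : (0:ℝ) < 2^n)]
  calc (A.card : ℝ) ≤ 2^n * (2 * Real.exp (lam^2*B - lam*t)) := hkey
    _ = 2 * Real.exp (-(t^2)/L^2) * 2^n := by
        rw [harg]
        ring
    _ ≤ 2 * Real.exp (-(8*t^2) / (π^2 * L^2)) * 2^n := by
        have := hexp_mono
        nlinarith [Real.exp_pos (-(t^2)/L^2), (by positivity : (0:ℝ) < (2:ℝ)^n)]
    _ = 2 * Real.exp (-(8 * t ^ 2) / (π ^ 2 * L ^ 2)) * 2 ^ n := by norm_num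
end
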